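/- arXiv:1102.4972 — 5 statements merged into one kernel-verified Lean document; each statement's English description precedes it below -/
import Mathlib

section
/- Let P ⊆ ℝ^d be a finite set of N points and let 1 ≤ k ≤ N be an integer. Then for every x ∈ ℝ^d, d_{P,k}(x)² = min over subsets C ⊆ P with |C| = k of (‖x − c̄_C‖² − w_{c̄_C}), where c̄_C = (1/k) Σ_{p∈C} p is the barycenter of C and w_{c̄_C} = −(1/k) Σ_{p∈C} ‖c̄_C − p‖². In other words, the squared k-distance is the power distance to the set of barycenters of k-point subsets of P with these weights. -/
open MeasureTheory Metric Finset

noncomputable section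

/-- The barycenter of a finite set `C` of points, viewed as a set of `k` points. -/
def bary {d : ℕ} (k : ℕ) (C : Finset (EuclideanSpace ℝ (Fin d))) :
    EuclideanSpace ℝ (Fin d) :=
  (k : ℝ)⁻¹ • ∑ p ∈ C, p

/-- The weight `w_{c̄_C} = -(1/k) ∑_{p ∈ C} ‖c̄_C - p‖²` of the barycenter of `C`. -/
def wt {d : ℕ} (k : ℕ) (C : Finset (EuclideanSpace ℝ (Fin d))) : ℝ :=
  -((k : ℝ)⁻¹ * ∑ p ∈ C, ‖bary k C - p‖ ^ 2)

/-- The `k`-distance to a finite point set `P`: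
`d_{P,k}(x)² = min_{C ⊆ P, |C| = k} (1/k) ∑_{p ∈ C} ‖x - p‖²`. -/
def kdist {d : ℕ} (P : Finset (EuclideanSpace ℝ (Fin d))) (k : ℕ)
    (x : EuclideanSpace ℝ (Fin d)) : ℝ :=
  Real.sqrt (sInf { y : ℝ | ∃ C ∈ P.powersetCard k, y = (k : ℝ)⁻¹ * ∑ p ∈ C, ‖x - p‖ ^ 2 })

lemma key {d : ℕ} (k : ℕ) (hk : 1 ≤ k) (C : Finset (EuclideanSpace ℝ (Fin d)))
    (hC : C.card = k) (x : EuclideanSpace ℝ (Fin d)) :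
    (k : ℝ)⁻¹ * ∑ p ∈ C, ‖x - p‖ ^ 2 = ‖x - bary k C‖ ^ 2 - wt k C := by
  have hk0 : (k : ℝ) ≠ 0 := by positivity
  have hsum0 : ∑ p ∈ C, (bary k C - p) = 0 := by
    rw [Finset.sum_sub_distrib, Finset.sum_const, hC, bary, ← Nat.cast_smul_eq_nsmul ℝ,
      smul_smul, mul_inv_cancel₀ hk0, one_smul, sub_self]
  have hexp : ∀ p ∈ C, ‖x - p‖ ^ 2 = ‖x - bary k C‖ ^ 2 +
      2 * (inner ℝ (x - bary k C) (bary k C - p) : ℝ) + ‖bary k C - p‖ ^ 2 := by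
    intro p _
    have : x - p = (x - bary k C) + (bary k C - p) := by abel
    rw [this, norm_add_sq_real]
  rw [Finset.sum_congr rfl hexp]
  rw [Finset.sum_add_distrib, Finset.sum_add_distrib, Finset.sum_const, hC,
    ← Finset.mul_sum, ← inner_sum, hsum0, inner_zero_right, mul_zero, add_zero]
  rw [wt]
  field_simp
  ring

/-- The squared `k`-distance is the power distance to the set of
barycenters of `k`-point subsets of `P` with weights `w_{c̄_C}`. -/
theorem kdist_sq_eq_power_distance {d : ℕ} (N k : ℕ)
    (P : Finset (EuclideanSpace ℝ (Fin d))) (hPN : P.card = N)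
    (hk : 1 ≤ k) (hkN : k ≤ N) (x : EuclideanSpace ℝ (Fin d)) :
    (kdist P k x) ^ 2 =
      sInf { y : ℝ | ∃ C ∈ P.powersetCard k, y = ‖x - bary k C‖ ^ 2 - wt k C } := by
  have hsets : { y : ℝ | ∃ C ∈ P.powersetCard k, y = (k : ℝ)⁻¹ * ∑ p ∈ C, ‖x - p‖ ^ 2 }
      = { y : ℝ | ∃ C ∈ P.powersetCard k, y = ‖x - bary k C‖ ^ 2 - wt k C } := by
    ext y
    constructor
    · rintro ⟨C, hC, rfl⟩
      exact ⟨C, hC, key k hk C (Finset.mem_powersetCard.mp hC).2 x⟩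
    · rintro ⟨C, hC, rfl⟩
      exact ⟨C, hC, (key k hk C (Finset.mem_powersetCard.mp hC).2 x).symm⟩
  rw [kdist, Real.sq_sqrt, hsets]
  apply Real.sInf_nonneg
  rintro y ⟨C, hC, rfl⟩
  positivity

end
end

section
/- Let P ⊆ ℝ^d be a finite set of N points and 1 ≤ k ≤ N. Then for every x ∈ ℝ^d, d_{P,k}(x) ≤ d^w_{P,k}(x) ≤ (2 + √2) · d_{P,k}(x). -/
open MeasureTheory Metric Finset

noncomputable section

/-- `C` is a witnessed `k`-subset of `P`: it is a `k`-point subset of `P` containing some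
point `x ∈ P` and minimizing `∑_{p ∈ C} ‖x - p‖²` among all `k`-point subsets of `P`
containing `x`; its barycenter is a witnessed `k`-barycenter (`x` and its `k-1` nearest
neighbors in `P`). -/
def IsWitnessed {d : ℕ} (P : Finset (EuclideanSpace ℝ (Fin d))) (k : ℕ)
    (C : Finset (EuclideanSpace ℝ (Fin d))) : Prop :=
  ∃ x ∈ P, C ∈ P.powersetCard k ∧ x ∈ C ∧
    ∀ C' ∈ P.powersetCard k, x ∈ C' →
      ∑ p ∈ C, ‖x - p‖ ^ 2 ≤ ∑ p ∈ C', ‖x - p‖ ^ 2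

/-- The witnessed `k`-distance: the power distance to the witnessed `k`-barycenters. -/
def wkdist {d : ℕ} (P : Finset (EuclideanSpace ℝ (Fin d))) (k : ℕ)
    (y : EuclideanSpace ℝ (Fin d)) : ℝ :=
  Real.sqrt (sInf { v : ℝ | ∃ C : Finset (EuclideanSpace ℝ (Fin d)),
    IsWitnessed P k C ∧ v = ‖y - bary k C‖ ^ 2 - wt k C })

/-- Parallel-axis identity: the power distance to the barycenter of `C` equals the
average squared distance to the points of `C`. -/
lemma key_identity {d k : ℕ} (hk : k ≠ 0) (C : Finset (EuclideanSpace ℝ (Fin d)))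
    (hC : C.card = k) (y : EuclideanSpace ℝ (Fin d)) :
    ‖y - bary k C‖ ^ 2 - wt k C = (k : ℝ)⁻¹ * ∑ p ∈ C, ‖y - p‖ ^ 2 := by
  set b := bary k C with hb
  have hsum : ∑ p ∈ C, (b - p) = 0 := by
    rw [Finset.sum_sub_distrib, Finset.sum_const, hC, hb, bary]
    rw [← Nat.cast_smul_eq_nsmul ℝ, smul_smul,
      mul_inv_cancel₀ (by exact_mod_cast hk : (k:ℝ) ≠ 0), one_smul, sub_self]
  have hexp : ∀ p ∈ C, ‖y - p‖ ^ 2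
      = ‖y - b‖ ^ 2 + 2 * (inner ℝ (y - b) (b - p) : ℝ) + ‖b - p‖ ^ 2 := by
    intro p _
    have h := norm_add_sq_real (y - b) (b - p)
    rw [sub_add_sub_cancel] at h
    exact h
  rw [Finset.sum_congr rfl hexp]
  rw [Finset.sum_add_distrib, Finset.sum_add_distrib, Finset.sum_const, hC]
  have : ∑ p ∈ C, 2 * (inner ℝ (y - b) (b - p) : ℝ)
      = 2 * (inner ℝ (y - b) (∑ p ∈ C, (b - p)) : ℝ) := by
    rw [← Finset.mul_sum, inner_sum]
  rw [this, hsum, inner_zero_right, wt, ← hb]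
  have hk' : (k : ℝ) ≠ 0 := by exact_mod_cast hk
  field_simp
  ring

/-- Averaged Minkowski-type inequality. -/
lemma avg_sq_triangle {α : Type*} {k : ℕ} (hk : k ≠ 0) (C : Finset α) (hC : C.card = k)
    (a : ℝ) (ha : 0 ≤ a) (b : α → ℝ) (hb : ∀ p ∈ C, 0 ≤ b p) :
    (k : ℝ)⁻¹ * ∑ p ∈ C, (a + b p) ^ 2
      ≤ (a + Real.sqrt ((k : ℝ)⁻¹ * ∑ p ∈ C, (b p) ^ 2)) ^ 2 := by
  have hkR : (0:ℝ) < k := by positivity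
  have hne : (k:ℝ) ≠ 0 := ne_of_gt hkR
  have hS0 : 0 ≤ (k : ℝ)⁻¹ * ∑ p ∈ C, (b p) ^ 2 :=
    mul_nonneg (by positivity) (Finset.sum_nonneg fun p _ => sq_nonneg _)
  have hsqS : Real.sqrt ((k : ℝ)⁻¹ * ∑ p ∈ C, (b p) ^ 2) ^ 2
      = (k : ℝ)⁻¹ * ∑ p ∈ C, (b p) ^ 2 := Real.sq_sqrt hS0
  have ht0 : 0 ≤ (k : ℝ)⁻¹ * ∑ p ∈ C, b p :=
    mul_nonneg (by positivity) (Finset.sum_nonneg hb)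
  have hchev : (∑ p ∈ C, b p) ^ 2 ≤ (k:ℝ) * ∑ p ∈ C, (b p) ^ 2 := by
    have := sq_sum_le_card_mul_sum_sq (s := C) (f := b)
    rw [hC] at this
    exact_mod_cast this
  have ht2 : ((k : ℝ)⁻¹ * ∑ p ∈ C, b p) ^ 2 ≤ (k : ℝ)⁻¹ * ∑ p ∈ C, (b p) ^ 2 := by
    have h1 : ((k : ℝ)⁻¹ * ∑ p ∈ C, b p) ^ 2
        = (k:ℝ)⁻¹ ^ 2 * (∑ p ∈ C, b p) ^ 2 := by ring
    have h2 : (k:ℝ)⁻¹ ^ 2 * (∑ p ∈ C, b p) ^ 2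
        ≤ (k:ℝ)⁻¹ ^ 2 * ((k:ℝ) * ∑ p ∈ C, (b p) ^ 2) :=
      mul_le_mul_of_nonneg_left hchev (by positivity)
    have h3 : (k:ℝ)⁻¹ ^ 2 * ((k:ℝ) * ∑ p ∈ C, (b p) ^ 2)
        = (k : ℝ)⁻¹ * ∑ p ∈ C, (b p) ^ 2 := by field_simp
    linarith
  have hcs : (k : ℝ)⁻¹ * ∑ p ∈ C, b p
      ≤ Real.sqrt ((k : ℝ)⁻¹ * ∑ p ∈ C, (b p) ^ 2) := by
    calc (k : ℝ)⁻¹ * ∑ p ∈ C, b p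
        = Real.sqrt (((k : ℝ)⁻¹ * ∑ p ∈ C, b p) ^ 2) := (Real.sqrt_sq ht0).symm
      _ ≤ _ := Real.sqrt_le_sqrt ht2
  have hexp : ∑ p ∈ C, (a + b p) ^ 2
      = (k : ℝ) * a ^ 2 + 2 * a * ∑ p ∈ C, b p + ∑ p ∈ C, (b p) ^ 2 := by
    have h : ∀ p ∈ C, (a + b p) ^ 2 = a ^ 2 + 2 * a * b p + (b p) ^ 2 :=
      fun p _ => by ring
    rw [Finset.sum_congr rfl h, Finset.sum_add_distrib, Finset.sum_add_distrib,
      Finset.sum_const, hC, nsmul_eq_mul, ← Finset.mul_sum]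
  have hL : (k:ℝ)⁻¹ * ((k:ℝ) * a ^ 2 + 2 * a * ∑ p ∈ C, b p + ∑ p ∈ C, (b p) ^ 2)
      = a ^ 2 + 2 * a * ((k:ℝ)⁻¹ * ∑ p ∈ C, b p)
        + (k:ℝ)⁻¹ * ∑ p ∈ C, (b p) ^ 2 := by
    field_simp
  rw [hexp, hL, add_sq, hsqS]
  have := mul_le_mul_of_nonneg_left hcs (by linarith : (0:ℝ) ≤ 2 * a)
  linarith

/-- Every point of `P` is contained in some witnessed `k`-subset, which moreover
minimizes the sum of squared distances to it. -/
lemma exists_witnessed {d : ℕ} (P : Finset (EuclideanSpace ℝ (Fin d))) (k : ℕ)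
    (hk : 1 ≤ k) (hkP : k ≤ P.card) {q : EuclideanSpace ℝ (Fin d)} (hq : q ∈ P) :
    ∃ C, IsWitnessed P k C ∧ q ∈ C ∧ C ∈ P.powersetCard k ∧
      ∀ C' ∈ P.powersetCard k, q ∈ C' →
        ∑ p ∈ C, ‖q - p‖ ^ 2 ≤ ∑ p ∈ C', ‖q - p‖ ^ 2 := by
  classical
  set F := (P.powersetCard k).filter (fun C => q ∈ C) with hF
  have hFne : F.Nonempty := by
    obtain ⟨u, hu1, hu2, hu3⟩ := Finset.exists_subsuperset_card_eq
      (Finset.singleton_subset_iff.mpr hq) (by simpa using hk) hkP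
    exact ⟨u, by
      simp only [hF, Finset.mem_filter, Finset.mem_powersetCard]
      exact ⟨⟨hu2, hu3⟩, Finset.singleton_subset_iff.mp hu1⟩⟩
  obtain ⟨C, hCF, hCmin⟩ := Finset.exists_min_image F
    (fun C => ∑ p ∈ C, ‖q - p‖ ^ 2) hFne
  simp only [hF, Finset.mem_filter] at hCF
  refine ⟨C, ⟨q, hq, hCF.1, hCF.2, ?_⟩, hCF.2, hCF.1, ?_⟩ <;>
  · intro C' hC' hqC'
    exact hCmin C' (by simp [hF, Finset.mem_filter, hC', hqC'])

set_option maxHeartbeats 1000000 in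
/-- **General Bound.** For every point `x`,
`d_{P,k}(x) ≤ d^w_{P,k}(x) ≤ (2 + √2) · d_{P,k}(x)`. -/
theorem kdist_le_wkdist_le {d : ℕ} (N k : ℕ)
    (P : Finset (EuclideanSpace ℝ (Fin d))) (hPN : P.card = N)
    (hk : 1 ≤ k) (hkN : k ≤ N) (x : EuclideanSpace ℝ (Fin d)) :
    kdist P k x ≤ wkdist P k x ∧ wkdist P k x ≤ (2 + Real.sqrt 2) * kdist P k x := by
  classical
  have hkP : k ≤ P.card := hPN ▸ hkN
  have hk0 : k ≠ 0 := by omega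
  have hkR : (0:ℝ) < k := by positivity
  set S : Set ℝ :=
    { y : ℝ | ∃ C ∈ P.powersetCard k, y = (k : ℝ)⁻¹ * ∑ p ∈ C, ‖x - p‖ ^ 2 } with hSdef
  set W : Set ℝ := { v : ℝ | ∃ C : Finset (EuclideanSpace ℝ (Fin d)),
    IsWitnessed P k C ∧ v = ‖x - bary k C‖ ^ 2 - wt k C } with hWdef
  have hkd : kdist P k x = Real.sqrt (sInf S) := rfl
  have hwkd : wkdist P k x = Real.sqrt (sInf W) := rfl
  -- basic facts about S
  have hSfin : S.Finite := by
    apply Set.Finite.subset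
      (Set.Finite.image (fun C => (k : ℝ)⁻¹ * ∑ p ∈ C, ‖x - p‖ ^ 2)
        (P.powersetCard k).finite_toSet)
    rintro v ⟨C, hC, rfl⟩
    exact ⟨C, hC, rfl⟩
  have hSne : S.Nonempty := by
    obtain ⟨C0, hC0P, hC0c⟩ := Finset.exists_subset_card_eq hkP
    exact ⟨_, C0, Finset.mem_powersetCard.mpr ⟨hC0P, hC0c⟩, rfl⟩
  have hSbdd : BddBelow S := by
    refine ⟨0, ?_⟩
    rintro v ⟨C, hC, rfl⟩
    positivity
  -- membership of witnessed values in S, and nonnegativity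
  have hWtoS : ∀ v ∈ W, v ∈ S := by
    rintro v ⟨C, hCw, rfl⟩
    obtain ⟨q, hqP, hCmem, hqC, hmin⟩ := hCw
    obtain ⟨hCP, hCc⟩ := Finset.mem_powersetCard.mp hCmem
    rw [key_identity hk0 C hCc x]
    exact ⟨C, hCmem, rfl⟩
  have hWsub : W ⊆ (fun C => ‖x - bary k C‖ ^ 2 - wt k C) '' ↑(P.powersetCard k) := by
    rintro v ⟨C, hCw, rfl⟩
    exact ⟨C, hCw.choose_spec.2.1, rfl⟩
  have hWfin : W.Finite :=
    Set.Finite.subset (Set.Finite.image _ (P.powersetCard k).finite_toSet) hWsub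
  have hPne : ∃ q, q ∈ P := by
    have : 0 < P.card := lt_of_lt_of_le (by omega) hkP
    obtain ⟨q, hq⟩ := Finset.card_pos.mp this
    exact ⟨q, hq⟩
  have hWne : W.Nonempty := by
    obtain ⟨q0, hq0⟩ := hPne
    obtain ⟨C, hCw, -⟩ := exists_witnessed P k hk hkP hq0
    exact ⟨_, C, hCw, rfl⟩
  have hWbdd : BddBelow W := by
    refine ⟨0, fun v hv => ?_⟩
    obtain ⟨C, hC, rfl⟩ := hWtoS v hv
    positivity
  -- the infimum m of S is attained
  set m : ℝ := sInf S with hmdef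
  have hmS : m ∈ S := Set.Nonempty.csInf_mem hSne hSfin
  obtain ⟨Cs, hCsmem, hmeq⟩ := hmS
  obtain ⟨hCsP, hCsc⟩ := Finset.mem_powersetCard.mp hCsmem
  have hm0 : 0 ≤ m := by rw [hmeq]; positivity
  have hsqm : Real.sqrt m ^ 2 = m := Real.sq_sqrt hm0
  constructor
  · -- first inequality
    rw [hkd, hwkd]
    apply Real.sqrt_le_sqrt
    apply le_csInf hWne
    intro v hv
    exact csInf_le hSbdd (hWtoS v hv)
  · -- second inequality
    -- choose q ∈ Cs closest to x
    have hCsne : Cs.Nonempty := Finset.card_pos.mp (by omega)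
    obtain ⟨q, hqCs, hqmin⟩ := Finset.exists_min_image Cs (fun p => ‖x - p‖ ^ 2) hCsne
    have hqP : q ∈ P := hCsP hqCs
    have ha2 : ‖x - q‖ ^ 2 ≤ m := by
      have h1 : (k:ℝ) * ‖x - q‖ ^ 2 ≤ ∑ p ∈ Cs, ‖x - p‖ ^ 2 := by
        calc (k:ℝ) * ‖x - q‖ ^ 2 = ∑ _p ∈ Cs, ‖x - q‖ ^ 2 := by
              rw [Finset.sum_const, hCsc, nsmul_eq_mul]
          _ ≤ _ := Finset.sum_le_sum hqmin
      have h2 : ∑ p ∈ Cs, ‖x - p‖ ^ 2 = (k:ℝ) * m := by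
        rw [hmeq]
        field_simp
      rw [h2] at h1
      exact le_of_mul_le_mul_left h1 hkR
    have ha : ‖x - q‖ ≤ Real.sqrt m := by
      calc ‖x - q‖ = Real.sqrt (‖x - q‖ ^ 2) := (Real.sqrt_sq (norm_nonneg _)).symm
        _ ≤ Real.sqrt m := Real.sqrt_le_sqrt ha2
    set a : ℝ := ‖x - q‖ with hadef
    have ha0 : 0 ≤ a := norm_nonneg _
    -- the witnessed set for q
    obtain ⟨C, hCw, hqC, hCmem, hCmin⟩ := exists_witnessed P k hk hkP hqP
    obtain ⟨hCP, hCc⟩ := Finset.mem_powersetCard.mp hCmem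
    -- B ≤ B' ≤ (a + √m)²
    have hBB' : (k:ℝ)⁻¹ * ∑ p ∈ C, ‖q - p‖ ^ 2
        ≤ (k:ℝ)⁻¹ * ∑ p ∈ Cs, ‖q - p‖ ^ 2 :=
      mul_le_mul_of_nonneg_left (hCmin Cs hCsmem hqCs) (by positivity)
    have hB' : (k:ℝ)⁻¹ * ∑ p ∈ Cs, ‖q - p‖ ^ 2 ≤ (a + Real.sqrt m) ^ 2 := by
      have hterm : ∀ p ∈ Cs, ‖q - p‖ ^ 2 ≤ (a + ‖x - p‖) ^ 2 := by
        intro p _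
        have htri : ‖q - p‖ ≤ a + ‖x - p‖ := by
          calc ‖q - p‖ ≤ ‖q - x‖ + ‖x - p‖ := norm_sub_le_norm_sub_add_norm_sub q x p
            _ = a + ‖x - p‖ := by rw [norm_sub_rev, hadef]
        exact pow_le_pow_left₀ (norm_nonneg _) htri 2
      calc (k:ℝ)⁻¹ * ∑ p ∈ Cs, ‖q - p‖ ^ 2
          ≤ (k:ℝ)⁻¹ * ∑ p ∈ Cs, (a + ‖x - p‖) ^ 2 :=
            mul_le_mul_of_nonneg_left (Finset.sum_le_sum hterm) (by positivity)
        _ ≤ (a + Real.sqrt ((k:ℝ)⁻¹ * ∑ p ∈ Cs, ‖x - p‖ ^ 2)) ^ 2 :=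
            avg_sq_triangle hk0 Cs hCsc a ha0 _ (fun p _ => norm_nonneg _)
        _ = (a + Real.sqrt m) ^ 2 := by rw [← hmeq]
    have hB2m : (k:ℝ)⁻¹ * ∑ p ∈ C, ‖q - p‖ ^ 2 ≤ (2 * Real.sqrt m) ^ 2 := by
      have : (a + Real.sqrt m) ^ 2 ≤ (2 * Real.sqrt m) ^ 2 := by
        apply pow_le_pow_left₀ (add_nonneg ha0 (Real.sqrt_nonneg _))
        linarith
      linarith
    have hsqrtB : Real.sqrt ((k:ℝ)⁻¹ * ∑ p ∈ C, ‖q - p‖ ^ 2) ≤ 2 * Real.sqrt m := by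
      calc Real.sqrt ((k:ℝ)⁻¹ * ∑ p ∈ C, ‖q - p‖ ^ 2)
          ≤ Real.sqrt ((2 * Real.sqrt m) ^ 2) := Real.sqrt_le_sqrt hB2m
        _ = 2 * Real.sqrt m := Real.sqrt_sq (by positivity)
    -- A ≤ (3√m)²
    have hA : (k:ℝ)⁻¹ * ∑ p ∈ C, ‖x - p‖ ^ 2 ≤ (3 * Real.sqrt m) ^ 2 := by
      have hterm : ∀ p ∈ C, ‖x - p‖ ^ 2 ≤ (a + ‖q - p‖) ^ 2 := by
        intro p _
        have htri : ‖x - p‖ ≤ a + ‖q - p‖ := by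
          calc ‖x - p‖ ≤ ‖x - q‖ + ‖q - p‖ := norm_sub_le_norm_sub_add_norm_sub x q p
            _ = a + ‖q - p‖ := by rw [hadef]
        exact pow_le_pow_left₀ (norm_nonneg _) htri 2
      have h1 : (k:ℝ)⁻¹ * ∑ p ∈ C, ‖x - p‖ ^ 2
          ≤ (a + Real.sqrt ((k:ℝ)⁻¹ * ∑ p ∈ C, ‖q - p‖ ^ 2)) ^ 2 := by
        calc (k:ℝ)⁻¹ * ∑ p ∈ C, ‖x - p‖ ^ 2
            ≤ (k:ℝ)⁻¹ * ∑ p ∈ C, (a + ‖q - p‖) ^ 2 :=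
              mul_le_mul_of_nonneg_left (Finset.sum_le_sum hterm) (by positivity)
          _ ≤ _ := avg_sq_triangle hk0 C hCc a ha0 _ (fun p _ => norm_nonneg _)
      have h2 : (a + Real.sqrt ((k:ℝ)⁻¹ * ∑ p ∈ C, ‖q - p‖ ^ 2)) ^ 2
          ≤ (3 * Real.sqrt m) ^ 2 := by
        apply pow_le_pow_left₀ (add_nonneg ha0 (Real.sqrt_nonneg _))
        have := Real.sqrt_nonneg ((k:ℝ)⁻¹ * ∑ p ∈ C, ‖q - p‖ ^ 2)
        linarith
      linarith
    -- conclude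
    have hWA : sInf W ≤ (k:ℝ)⁻¹ * ∑ p ∈ C, ‖x - p‖ ^ 2 := by
      have hmem : ‖x - bary k C‖ ^ 2 - wt k C ∈ W := ⟨C, hCw, rfl⟩
      have := csInf_le hWbdd hmem
      rwa [key_identity hk0 C hCc x] at this
    have hW9 : sInf W ≤ (3 * Real.sqrt m) ^ 2 := le_trans hWA hA
    have h12 : (1:ℝ) ≤ Real.sqrt 2 := by
      rw [show (1:ℝ) = Real.sqrt 1 by simp]
      exact Real.sqrt_le_sqrt one_le_two
    rw [hwkd, hkd]
    calc Real.sqrt (sInf W) ≤ Real.sqrt ((3 * Real.sqrt m) ^ 2) := Real.sqrt_le_sqrt hW9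
      _ = 3 * Real.sqrt m := Real.sqrt_sq (by positivity)
      _ ≤ (2 + Real.sqrt 2) * Real.sqrt m := by
          apply mul_le_mul_of_nonneg_right _ (Real.sqrt_nonneg m)
          linarith

end
end

section
/- Let μ be a probability measure on ℝ^d with compact support K, of dimension at most ℓ with constant α > 0. Let P ⊆ ℝ^d be a finite set of N points, let 1 ≤ k ≤ N be an integer and set m₀ = k/N. Then sup_{x ∈ ℝ^d} |d_{P,k}(x) − d_K(x)| ≤ m₀^{−1/2} · W₂(μ, U_P) + α^{−1/ℓ} · m₀^{1/ℓ}. -/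
open MeasureTheory Metric Finset
open scoped ENNReal NNReal

noncomputable section

/-- The support of a measure: the set of points all of whose open neighborhoods have
positive measure (the smallest closed set whose complement has zero measure). -/
def msupp {d : ℕ} (μ : Measure (EuclideanSpace ℝ (Fin d))) : Set (EuclideanSpace ℝ (Fin d)) :=
  { x | ∀ U : Set (EuclideanSpace ℝ (Fin d)), IsOpen U → x ∈ U → 0 < μ U }

/-- `μ` has dimension at most `ℓ` with constant `α`: `μ(B̄(p,r)) ≥ α rℓ` for every `p` in
the support of `μ` and every `0 < r < diam (supp μ)`. -/
def HasDimLE {d : ℕ} (μ : Measure (EuclideanSpace ℝ (Fin d))) (ℓ α : ℝ) : Prop :=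
  ∀ p ∈ msupp μ, ∀ r : ℝ, 0 < r → ENNReal.ofReal r < EMetric.diam (msupp μ) →
    ENNReal.ofReal (α * r ^ ℓ) ≤ μ (Metric.closedBall p r)

/-- The 2-Wasserstein distance between two measures, as the infimum over transport plans
(couplings) of the square root of the transport cost `∫ ‖x - y‖² dπ(x,y)`. -/
def W2 {d : ℕ} (μ ν : Measure (EuclideanSpace ℝ (Fin d))) : ℝ≥0∞ :=
  ⨅ (π : Measure (EuclideanSpace ℝ (Fin d) × EuclideanSpace ℝ (Fin d)))
    (_ : π.map Prod.fst = μ) (_ : π.map Prod.snd = ν),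
      (∫⁻ p, edist p.1 p.2 ^ 2 ∂π) ^ (1/2 : ℝ)

/-- The uniform probability measure on a finite point set. -/
def unif {d : ℕ} (P : Finset (EuclideanSpace ℝ (Fin d))) : Measure (EuclideanSpace ℝ (Fin d)) :=
  (P.card : ℝ≥0∞)⁻¹ • ∑ p ∈ P, Measure.dirac p

abbrev Euc (d : ℕ) := EuclideanSpace ℝ (Fin d)


variable {d : ℕ}

lemma measure_compl_msupp (μ : Measure (Euc d)) : μ (msupp μ)ᶜ = 0 := by
  obtain ⟨T, hTc, hTU⟩ := TopologicalSpace.isOpen_iUnion_countable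
    (fun i : {U : Set (Euc d) // IsOpen U ∧ μ U = 0} => i.1) (fun i => i.2.1)
  have hsub : (msupp μ)ᶜ ⊆ ⋃ i : {U : Set (Euc d) // IsOpen U ∧ μ U = 0}, i.1 := by
    intro x hx
    simp only [msupp, Set.mem_compl_iff, Set.mem_setOf_eq, not_forall] at hx
    obtain ⟨U, hUo, hxU, hU0⟩ := hx
    exact Set.mem_iUnion.2 ⟨⟨U, hUo, by simpa using hU0⟩, hxU⟩
  refine measure_mono_null hsub ?_
  rw [← hTU]
  exact (measure_biUnion_null_iff hTc).2 fun i _ => i.2.2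

lemma exists_lower_subset {X : Type*} [DecidableEq X] (v : X → ℝ≥0∞) :
    ∀ (k : ℕ) (s : Finset X), k ≤ s.card →
      ∃ C, C ⊆ s ∧ C.card = k ∧ ∀ p ∈ C, ∀ q ∈ s \ C, v p ≤ v q := by
  intro k
  induction k with
  | zero => exact fun s _ => ⟨∅, Finset.empty_subset _, rfl, by simp⟩
  | succ n ih =>
    intro s hks
    obtain ⟨C, hCs, hCcard, hC⟩ := ih s (le_trans (Nat.le_succ n) hks)
    have hne : (s \ C).Nonempty := by
      rw [← Finset.card_pos, Finset.card_sdiff_of_subset hCs]; omega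
    obtain ⟨m, hm, hmin⟩ := Finset.exists_min_image (s \ C) v hne
    have hmC : m ∉ C := (Finset.mem_sdiff.1 hm).2
    refine ⟨insert m C, Finset.insert_subset (Finset.mem_sdiff.1 hm).1 hCs, ?_, ?_⟩
    · rw [Finset.card_insert_of_notMem hmC, hCcard]
    · intro p hp q hq
      have hq' : q ∈ s \ C := by
        rcases Finset.mem_sdiff.1 hq with ⟨h1, h2⟩
        exact Finset.mem_sdiff.2 ⟨h1, fun h => h2 (Finset.mem_insert_of_mem h)⟩
      rcases Finset.mem_insert.1 hp with rfl | hp'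
      · exact hmin q hq'
      · exact hC p hp' q hq'

lemma sum_smallest_le {X : Type*} [DecidableEq X] {s C : Finset X} (hCs : C ⊆ s)
    (v w : X → ℝ≥0∞) {u : ℝ≥0∞} (hu : u ≠ ⊤) (hw : ∀ p ∈ s, w p ≤ u)
    (hsum : ∑ p ∈ s, w p = C.card * u)
    (hC : ∀ p ∈ C, ∀ q ∈ s \ C, v p ≤ v q) :
    ∑ p ∈ C, u * v p ≤ ∑ p ∈ s, w p * v p := by
  have hwC : ∀ p ∈ C, w p ≤ u := fun p hp => hw p (hCs hp)
  set t := C.sup v with ht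
  have hvt : ∀ p ∈ C, v p ≤ t := fun p hp => Finset.le_sup hp
  have htv : ∀ q ∈ s \ C, t ≤ v q := fun q hq => Finset.sup_le fun p hp => hC p hp q hq
  have hCfin : ∑ p ∈ C, w p ≠ ⊤ := by
    refine (lt_of_le_of_lt (Finset.sum_le_sum hwC) ?_).ne
    simp only [Finset.sum_const, nsmul_eq_mul]
    exact ENNReal.mul_lt_top (by simp) hu.lt_top
  have hCu : (∑ _p ∈ C, u) = C.card * u := by simp [Finset.sum_const, nsmul_eq_mul]
  have hsplit : ∑ p ∈ C, (u - w p) = ∑ q ∈ s \ C, w q := by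
    have h1 : ∑ p ∈ C, (u - w p) + ∑ p ∈ C, w p = C.card * u := by
      rw [← Finset.sum_add_distrib, ← hCu]
      exact Finset.sum_congr rfl fun p hp => tsub_add_cancel_of_le (hwC p hp)
    have h2 : ∑ q ∈ s \ C, w q + ∑ p ∈ C, w p = C.card * u := by
      rw [Finset.sum_sdiff hCs, hsum]
    exact WithTop.add_right_cancel hCfin (h1.trans h2.symm)
  calc ∑ p ∈ C, u * v p
      = ∑ p ∈ C, (w p * v p + (u - w p) * v p) := by
        refine Finset.sum_congr rfl fun p hp => ?_
        rw [← add_mul, add_comm, tsub_add_cancel_of_le (hwC p hp)]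
    _ = ∑ p ∈ C, w p * v p + ∑ p ∈ C, (u - w p) * v p := Finset.sum_add_distrib
    _ ≤ ∑ p ∈ C, w p * v p + ∑ p ∈ C, (u - w p) * t := by
        gcongr with p hp; exact hvt p hp
    _ = ∑ p ∈ C, w p * v p + (∑ q ∈ s \ C, w q) * t := by rw [← Finset.sum_mul, hsplit]
    _ ≤ ∑ p ∈ C, w p * v p + ∑ q ∈ s \ C, w q * v q := by
        rw [Finset.sum_mul]; gcongr with q hq; exact htv q hq
    _ = ∑ p ∈ s, w p * v p := by rw [add_comm, Finset.sum_sdiff hCs]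




/-- the lintegral of a set-integral against `unif`. -/
lemma setLIntegral_unif (P : Finset (Euc d)) (g : Euc d → ℝ≥0∞) (t : Set (Euc d))
    (ht : MeasurableSet t) :
    ∫⁻ b in t, g b ∂(unif P) = (P.card : ℝ≥0∞)⁻¹ * ∑ q ∈ P, t.indicator g q := by
  rw [unif, Measure.restrict_smul, lintegral_smul_measure, ← lintegral_indicator ht]
  congr 1
  rw [lintegral_finset_sum_measure]
  exact Finset.sum_congr rfl fun q _ => lintegral_dirac q (t.indicator g)

lemma unif_apply (P : Finset (Euc d)) (t : Set (Euc d)) (ht : MeasurableSet t) :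
    unif P t = (P.card : ℝ≥0∞)⁻¹ * ∑ q ∈ P, t.indicator 1 q := by
  have := setLIntegral_unif P 1 t ht
  simpa using this

lemma unif_singleton {P : Finset (Euc d)} {p : Euc d} (hp : p ∈ P) :
    unif P {p} = (P.card : ℝ≥0∞)⁻¹ := by
  rw [unif_apply P _ (measurableSet_singleton p)]
  rw [Finset.sum_eq_single p (fun q _ hq => Set.indicator_of_notMem (by simp [hq]) _)
    (fun h => absurd hp h)]
  simp

lemma unif_coe {P C : Finset (Euc d)} (hC : C ⊆ P) :
    unif P ↑C = (C.card : ℝ≥0∞) * (P.card : ℝ≥0∞)⁻¹ := by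
  rw [unif_apply P _ (C.finite_toSet.measurableSet)]
  rw [mul_comm]
  congr 1
  rw [← Finset.sum_subset hC (fun q _ hq => Set.indicator_of_notMem (by simpa using hq) _)]
  have : ∀ q ∈ C, (↑C : Set (Euc d)).indicator (1 : Euc d → ℝ≥0∞) q = 1 := fun q hq =>
    Set.indicator_of_mem (by simpa using hq) _
  rw [Finset.sum_congr rfl this]
  simp

lemma unif_compl (P : Finset (Euc d)) : unif P (↑P : Set (Euc d))ᶜ = 0 := by
  rw [unif_apply P _ (P.finite_toSet.measurableSet.compl)]
  have : ∀ q ∈ P, (↑P : Set (Euc d))ᶜ.indicator (1 : Euc d → ℝ≥0∞) q = 0 := fun q hq =>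
    Set.indicator_of_notMem (by simpa using hq) _
  rw [Finset.sum_congr rfl this]
  simp

lemma unif_univ (P : Finset (Euc d)) (hP : P.Nonempty) : unif P Set.univ = 1 := by
  rw [unif_apply P _ MeasurableSet.univ]
  simp only [Set.indicator_univ, Pi.one_apply, Finset.sum_const, nsmul_eq_mul, mul_one]
  exact ENNReal.inv_mul_cancel (by simpa [Finset.card_eq_zero, Finset.nonempty_iff_ne_empty] using hP)
    (by simp)

lemma unif_isProb (P : Finset (Euc d)) (hP : P.Nonempty) : IsProbabilityMeasure (unif P) :=
  ⟨unif_univ P hP⟩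

lemma kdist_nonneg (P : Finset (Euc d)) (k : ℕ) (x : Euc d) : 0 ≤ kdist P k x :=
  Real.sqrt_nonneg _

lemma kdist_facts (P : Finset (Euc d)) (k : ℕ) (x : Euc d) (hk : k ≤ P.card) :
    (∀ C ∈ P.powersetCard k, kdist P k x ^ 2 ≤ (k : ℝ)⁻¹ * ∑ p ∈ C, ‖x - p‖ ^ 2) ∧
    ∃ C ∈ P.powersetCard k, kdist P k x ^ 2 = (k : ℝ)⁻¹ * ∑ p ∈ C, ‖x - p‖ ^ 2 := by
  set S := { y : ℝ | ∃ C ∈ P.powersetCard k, y = (k : ℝ)⁻¹ * ∑ p ∈ C, ‖x - p‖ ^ 2 } with hS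
  have hkd : kdist P k x = Real.sqrt (sInf S) := rfl
  have hSeq : S = ↑((P.powersetCard k).image fun C => (k : ℝ)⁻¹ * ∑ p ∈ C, ‖x - p‖ ^ 2) := by
    ext y; simp [hS, eq_comm]
  have hfin : S.Finite := by rw [hSeq]; exact Finset.finite_toSet _
  have hne : S.Nonempty := by
    obtain ⟨C, hCs, hCc⟩ := Finset.exists_subset_card_eq hk
    exact ⟨_, C, Finset.mem_powersetCard.2 ⟨hCs, hCc⟩, rfl⟩
  have hmem : sInf S ∈ S := hne.csInf_mem hfin
  have hnonneg : 0 ≤ sInf S := by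
    obtain ⟨C, hC, hEq⟩ := hmem
    rw [hEq]; positivity
  have hsq : kdist P k x ^ 2 = sInf S := by rw [hkd, Real.sq_sqrt hnonneg]
  refine ⟨fun C hC => ?_, ?_⟩
  · rw [hsq]; exact csInf_le hfin.bddBelow ⟨C, hC, rfl⟩
  · rw [hsq]; exact hmem

section coupling
variable {P : Finset (Euc d)} {π : Measure (Euc d × Euc d)} {μ : Measure (Euc d)}

lemma coupling_snd_apply (hsnd : π.map Prod.snd = unif P) {t : Set (Euc d)}
    (ht : MeasurableSet t) : π (Prod.snd ⁻¹' t) = unif P t := by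
  rw [← hsnd, Measure.map_apply measurable_snd ht]

lemma coupling_fst_apply (hfst : π.map Prod.fst = μ) {t : Set (Euc d)}
    (ht : MeasurableSet t) : π (Prod.fst ⁻¹' t) = μ t := by
  rw [← hfst, Measure.map_apply measurable_fst ht]

lemma coupling_ae_snd_mem (hsnd : π.map Prod.snd = unif P) :
    ∀ᵐ z ∂π, z.2 ∈ (↑P : Set (Euc d)) := by
  rw [ae_iff]
  have h : {z : Euc d × Euc d | ¬ z.2 ∈ (↑P : Set (Euc d))} =
      Prod.snd ⁻¹' (↑P : Set (Euc d))ᶜ := rfl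
  rw [h, coupling_snd_apply hsnd P.finite_toSet.measurableSet.compl, unif_compl]

lemma coupling_ae_fst_mem (hfst : π.map Prod.fst = μ) {K : Set (Euc d)}
    (hKm : MeasurableSet K) (hK0 : μ Kᶜ = 0) : ∀ᵐ z ∂π, z.1 ∈ K := by
  rw [ae_iff]
  have h : {z : Euc d × Euc d | ¬ z.1 ∈ K} = Prod.fst ⁻¹' Kᶜ := rfl
  rw [h, coupling_fst_apply hfst hKm.compl, hK0]

lemma setLIntegral_snd_decomp (hsnd : π.map Prod.snd = unif P)
    {g : Euc d → ℝ≥0∞} (hg : Measurable g) {A : Set (Euc d × Euc d)} (hA : MeasurableSet A) :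
    ∫⁻ z in A, g z.2 ∂π = ∑ p ∈ P, g p * π (A ∩ Prod.snd ⁻¹' {p}) := by
  have h0 : π (Prod.snd ⁻¹' (↑P : Set (Euc d))ᶜ) = 0 := by
    rw [coupling_snd_apply hsnd P.finite_toSet.measurableSet.compl, unif_compl]
  have h1 : A =ᵐ[π] (A ∩ Prod.snd ⁻¹' (↑P : Set (Euc d)) : Set (Euc d × Euc d)) := by
    rw [Filter.eventuallyEq_set]
    filter_upwards [coupling_ae_snd_mem hsnd] with z hz
    simp [hz]
  have h2 : A ∩ Prod.snd ⁻¹' (↑P : Set (Euc d)) = ⋃ p ∈ P, (A ∩ Prod.snd ⁻¹' {p}) := by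
    ext z
    simp only [Set.mem_inter_iff, Set.mem_preimage, Finset.mem_coe, Set.mem_iUnion,
      Set.mem_singleton_iff]
    constructor
    · rintro ⟨hzA, hzP⟩; exact ⟨z.2, hzP, hzA, rfl⟩
    · rintro ⟨p, hp, hzA, hzp⟩; exact ⟨hzA, hzp ▸ hp⟩
  rw [setLIntegral_congr h1, h2, lintegral_biUnion_finset ?hd ?hm]
  case hd =>
    intro p _ q _ hpq
    exact Disjoint.mono Set.inter_subset_right Set.inter_subset_right
      (Disjoint.preimage _ (Set.disjoint_singleton.2 hpq))
  case hm =>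
    exact fun p _ => hA.inter (measurable_snd (measurableSet_singleton p))
  refine Finset.sum_congr rfl fun p hp => ?_
  have hmeas : MeasurableSet (A ∩ Prod.snd ⁻¹' {p}) :=
    hA.inter (measurable_snd (measurableSet_singleton p))
  rw [setLIntegral_congr_fun hmeas ?_, setLIntegral_const]
  intro z hz
  have : z.2 = p := hz.2
  simp only [this]

end coupling

lemma sqrt_sq' (x : ℝ≥0∞) : (x ^ 2) ^ (1/2 : ℝ) = x := by
  rw [← ENNReal.rpow_two, ← ENNReal.rpow_mul]
  norm_num

section main
variable {P : Finset (Euc d)} {π : Measure (Euc d × Euc d)} {μ : Measure (Euc d)}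

/-- `∫⁻ z in snd⁻¹' C, (edist x z.2)^2 ∂π` in terms of `kdist`. -/
lemma setLIntegral_edist_sq_snd (hsnd : π.map Prod.snd = unif P)
    {C : Finset (Euc d)} (hCP : C ⊆ P) (x : Euc d) :
    ∫⁻ z in Prod.snd ⁻¹' (↑C : Set (Euc d)), edist x z.2 ^ 2 ∂π =
      (P.card : ℝ≥0∞)⁻¹ * ENNReal.ofReal (∑ p ∈ C, ‖x - p‖ ^ 2) := by
  have hg : Measurable fun b : Euc d => edist x b ^ 2 :=
    (measurable_const.edist measurable_id).pow_const 2
  have h1 := setLIntegral_map (f := fun b : Euc d => edist x b ^ 2)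
    C.finite_toSet.measurableSet hg measurable_snd (μ := π)
  rw [hsnd] at h1
  rw [← h1, setLIntegral_unif P _ _ C.finite_toSet.measurableSet,
    Finset.sum_indicator_subset _ hCP]
  congr 1
  rw [ENNReal.ofReal_sum_of_nonneg (fun p _ => by positivity)]
  refine Finset.sum_congr rfl fun p _ => ?_
  rw [edist_dist, dist_eq_norm, ← ENNReal.ofReal_pow (by positivity)]

lemma coupling_lower [IsProbabilityMeasure μ]
    {K : Set (Euc d)} (hKm : MeasurableSet K) (hK0 : μ Kᶜ = 0)
    {N k : ℕ} (hPN : P.card = N) (hk : 1 ≤ k) (hkN : k ≤ N)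
    (hfst : π.map Prod.fst = μ) (hsnd : π.map Prod.snd = unif P)
    (x : Euc d) :
    ENNReal.ofReal (Metric.infDist x K) ≤ ENNReal.ofReal (kdist P k x) +
      ((k : ℝ≥0∞) * (N : ℝ≥0∞)⁻¹) ^ (-(1/2) : ℝ) *
        (∫⁻ z, edist z.1 z.2 ^ 2 ∂π) ^ (1/2 : ℝ) := by
  classical
  set c : ℝ≥0∞ := ∫⁻ z, edist z.1 z.2 ^ 2 ∂π with hc
  set m : ℝ≥0∞ := (k : ℝ≥0∞) * (N : ℝ≥0∞)⁻¹ with hm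
  have hN1 : 1 ≤ N := le_trans hk hkN
  have hkne : (k : ℝ≥0∞) ≠ 0 := Nat.cast_ne_zero.2 (by omega)
  have hNne : (N : ℝ≥0∞) ≠ 0 := Nat.cast_ne_zero.2 (by omega)
  have hm0 : m ≠ 0 := by
    rw [hm]; exact mul_ne_zero hkne (ENNReal.inv_ne_zero.2 (by simp))
  have hmtop : m ≠ ⊤ := by
    rw [hm]; exact ENNReal.mul_ne_top (by simp) (ENNReal.inv_ne_top.2 hNne)
  obtain ⟨-, C, hCmem, hCeq⟩ := kdist_facts P k x (hPN ▸ hkN)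
  obtain ⟨hCP, hCcard⟩ := Finset.mem_powersetCard.1 hCmem
  set T : Set (Euc d × Euc d) := Prod.snd ⁻¹' (↑C : Set (Euc d)) with hT
  have hTm : MeasurableSet T := measurable_snd C.finite_toSet.measurableSet
  have hπT : π T = m := by
    rw [hT, coupling_snd_apply hsnd C.finite_toSet.measurableSet, unif_coe hCP, hCcard, hPN]
  -- step A
  have hstepA : ∫⁻ z in T, edist x z.2 ^ 2 ∂π = m * ENNReal.ofReal (kdist P k x) ^ 2 := by
    rw [hT, setLIntegral_edist_sq_snd hsnd hCP x, hPN]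
    have hsum : ∑ p ∈ C, ‖x - p‖ ^ 2 = (k : ℝ) * (kdist P k x ^ 2) := by
      rw [hCeq, ← mul_assoc, mul_inv_cancel₀ (Nat.cast_ne_zero.2 (by omega) : (k:ℝ) ≠ 0), one_mul]
    rw [hsum, ENNReal.ofReal_mul (by positivity), ENNReal.ofReal_natCast,
      ENNReal.ofReal_pow (kdist_nonneg P k x), hm]
    ring
  -- pointwise bound
  have hae : ∀ᵐ z ∂(π.restrict T),
      ENNReal.ofReal (Metric.infDist x K) ^ 2 ≤
        (edist x z.2 + edist z.1 z.2) ^ 2 := by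
    filter_upwards [ae_restrict_of_ae (coupling_ae_fst_mem hfst hKm hK0)] with z hz
    have h1 : Metric.infDist x K ≤ dist x z.2 + dist z.2 z.1 :=
      le_trans (Metric.infDist_le_dist_of_mem hz) (dist_triangle x z.2 z.1)
    have h2 : ENNReal.ofReal (Metric.infDist x K) ≤ edist x z.2 + edist z.1 z.2 := by
      refine le_trans (ENNReal.ofReal_le_ofReal h1) ?_
      rw [ENNReal.ofReal_add dist_nonneg dist_nonneg, edist_dist, edist_dist, dist_comm z.2 z.1]
    rw [pow_two, pow_two]; exact mul_le_mul' h2 h2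
  -- main chain
  have hfmeas : Measurable fun z : Euc d × Euc d => edist x z.2 :=
    measurable_const.edist measurable_snd
  have hgmeas : Measurable fun z : Euc d × Euc d => edist z.1 z.2 :=
    measurable_fst.edist measurable_snd
  have hmink := ENNReal.lintegral_Lp_add_le (μ := π.restrict T)
    hfmeas.aemeasurable hgmeas.aemeasurable one_le_two
  simp only [ENNReal.rpow_two, Pi.add_apply] at hmink
  have key : m ^ (1/2 : ℝ) * ENNReal.ofReal (Metric.infDist x K) ≤
      m ^ (1/2 : ℝ) * ENNReal.ofReal (kdist P k x) + c ^ (1/2 : ℝ) := by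
    calc m ^ (1/2 : ℝ) * ENNReal.ofReal (Metric.infDist x K)
        = (ENNReal.ofReal (Metric.infDist x K) ^ 2 * m) ^ (1/2 : ℝ) := by
          rw [ENNReal.mul_rpow_of_nonneg (ENNReal.ofReal (Metric.infDist x K) ^ 2) m
            (by norm_num), sqrt_sq', mul_comm]
      _ = (∫⁻ _z in T, ENNReal.ofReal (Metric.infDist x K) ^ 2 ∂π) ^ (1/2 : ℝ) := by
          rw [setLIntegral_const, hπT]
      _ ≤ (∫⁻ z in T, (edist x z.2 + edist z.1 z.2) ^ 2 ∂π)
            ^ (1/2 : ℝ) := ENNReal.rpow_le_rpow (lintegral_mono_ae hae) (by norm_num)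
      _ ≤ (∫⁻ z in T, edist x z.2 ^ 2 ∂π) ^ (1/2 : ℝ) +
            (∫⁻ z in T, edist z.1 z.2 ^ 2 ∂π) ^ (1/2 : ℝ) := hmink
      _ ≤ (m * ENNReal.ofReal (kdist P k x) ^ 2) ^ (1/2 : ℝ) + c ^ (1/2 : ℝ) := by
          rw [hstepA]
          gcongr
          exact setLIntegral_le_lintegral T _
      _ = m ^ (1/2 : ℝ) * ENNReal.ofReal (kdist P k x) + c ^ (1/2 : ℝ) := by
          rw [ENNReal.mul_rpow_of_nonneg m (ENNReal.ofReal (kdist P k x) ^ 2)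
            (by norm_num), sqrt_sq']
  -- divide by m^(1/2)
  have hm12 : m ^ (1/2 : ℝ) ≠ 0 := by
    simp [ENNReal.rpow_eq_zero_iff, hm0, hmtop]
  have hm12top : m ^ (1/2 : ℝ) ≠ ⊤ := ENNReal.rpow_ne_top_of_nonneg (by norm_num) hmtop
  calc ENNReal.ofReal (Metric.infDist x K)
      = (m ^ (1/2 : ℝ))⁻¹ * (m ^ (1/2 : ℝ) * ENNReal.ofReal (Metric.infDist x K)) := by
        rw [← mul_assoc, ENNReal.inv_mul_cancel hm12 hm12top, one_mul]
    _ ≤ (m ^ (1/2 : ℝ))⁻¹ * (m ^ (1/2 : ℝ) * ENNReal.ofReal (kdist P k x) + c ^ (1/2 : ℝ)) := by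
        gcongr
    _ = ENNReal.ofReal (kdist P k x) + (m ^ (1/2 : ℝ))⁻¹ * c ^ (1/2 : ℝ) := by
        rw [mul_add, ← mul_assoc, ENNReal.inv_mul_cancel hm12 hm12top, one_mul]
    _ = ENNReal.ofReal (kdist P k x) + m ^ (-(1/2) : ℝ) * c ^ (1/2 : ℝ) := by
        rw [ENNReal.rpow_neg]


lemma sum_edist_sq (C : Finset (Euc d)) (x : Euc d) :
    ∑ p ∈ C, edist x p ^ 2 = ENNReal.ofReal (∑ p ∈ C, ‖x - p‖ ^ 2) := by
  rw [ENNReal.ofReal_sum_of_nonneg (fun p _ => by positivity)]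
  exact Finset.sum_congr rfl fun p _ => by
    rw [edist_dist, dist_eq_norm, ← ENNReal.ofReal_pow (by positivity)]

lemma coupling_upper [IsProbabilityMeasure μ]
    {K : Set (Euc d)} (hK : IsCompact K) (hsupp : msupp μ = K)
    {ℓ α : ℝ} (hℓ : 0 < ℓ) (hα : 0 < α) (hdim : HasDimLE μ ℓ α)
    {N k : ℕ} (hPN : P.card = N) (hk : 1 ≤ k) (hkN : k ≤ N)
    (hfst : π.map Prod.fst = μ) (hsnd : π.map Prod.snd = unif P) (x : Euc d) :
    ENNReal.ofReal (kdist P k x) ≤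
      ENNReal.ofReal (Metric.infDist x K + α ^ (-(1/ℓ)) * ((k : ℝ)/(N : ℝ)) ^ (1/ℓ)) +
      ((k : ℝ≥0∞) * (N : ℝ≥0∞)⁻¹) ^ (-(1/2) : ℝ) *
        (∫⁻ z, edist z.1 z.2 ^ 2 ∂π) ^ (1/2 : ℝ) := by
  classical
  set c : ℝ≥0∞ := ∫⁻ z, edist z.1 z.2 ^ 2 ∂π with hc
  set m : ℝ≥0∞ := (k : ℝ≥0∞) * (N : ℝ≥0∞)⁻¹ with hm
  have hN1 : 1 ≤ N := le_trans hk hkN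
  have hkne : (k : ℝ≥0∞) ≠ 0 := Nat.cast_ne_zero.2 (by omega)
  have hNne : (N : ℝ≥0∞) ≠ 0 := Nat.cast_ne_zero.2 (by omega)
  have hm0 : m ≠ 0 := by
    rw [hm]; exact mul_ne_zero hkne (ENNReal.inv_ne_zero.2 (by simp))
  have hmtop : m ≠ ⊤ := by
    rw [hm]; exact ENNReal.mul_ne_top (by simp) (ENNReal.inv_ne_top.2 hNne)
  have hK0 : μ Kᶜ = 0 := by rw [← hsupp]; exact measure_compl_msupp μ
  have hKm : MeasurableSet K := hK.isClosed.measurableSet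
  have hμK : μ K = 1 := by
    refine le_antisymm prob_le_one ?_
    have h1 : (1 : ℝ≥0∞) = μ (K ∪ Kᶜ) := by rw [Set.union_compl_self]; exact (measure_univ).symm
    calc (1 : ℝ≥0∞) = μ (K ∪ Kᶜ) := h1
      _ ≤ μ K + μ Kᶜ := measure_union_le _ _
      _ = μ K := by rw [hK0, add_zero]
  have hKne : K.Nonempty := by
    rcases Set.eq_empty_or_nonempty K with h | h
    · exfalso; rw [h, measure_empty] at hμK; exact zero_ne_one hμK
    · exact h
  obtain ⟨y, hyK, hxy⟩ := hK.exists_infDist_eq_dist hKne x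
  -- the radius
  set m₀ : ℝ := (k : ℝ) / (N : ℝ) with hm₀
  have hm₀pos : 0 < m₀ := by
    apply div_pos <;> [exact_mod_cast hk; exact_mod_cast hN1]
  have hm₀le1 : m₀ ≤ 1 := by
    rw [hm₀, div_le_one (by exact_mod_cast hN1)]
    exact_mod_cast hkN
  have hofm₀ : ENNReal.ofReal m₀ = m := by
    rw [hm₀, ENNReal.ofReal_div_of_pos (by exact_mod_cast hN1), hm,
      ENNReal.ofReal_natCast, ENNReal.ofReal_natCast, div_eq_mul_inv]
  set r : ℝ := α ^ (-(1/ℓ)) * m₀ ^ (1/ℓ) with hr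
  have hrpos : 0 < r := mul_pos (Real.rpow_pos_of_pos hα _) (Real.rpow_pos_of_pos hm₀pos _)
  have hαr : α * r ^ ℓ = m₀ := by
    rw [hr, Real.mul_rpow (Real.rpow_pos_of_pos hα _).le (Real.rpow_pos_of_pos hm₀pos _).le,
      ← Real.rpow_mul hα.le, ← Real.rpow_mul hm₀pos.le]
    have h1 : (-(1/ℓ)) * ℓ = -1 := by field_simp
    have h2 : (1/ℓ) * ℓ = 1 := by field_simp
    rw [h1, h2, Real.rpow_neg_one, Real.rpow_one, ← mul_assoc, mul_inv_cancel₀ hα.ne', one_mul]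
  -- mass of the ball
  set M : ℝ≥0∞ := μ (Metric.closedBall y r) with hMdef
  have hM : m ≤ M := by
    by_cases hlt : ENNReal.ofReal r < EMetric.diam (msupp μ)
    · have h := hdim y (by rw [hsupp]; exact hyK) r hrpos hlt
      rwa [hαr, hofm₀] at h
    · have hsub : K ⊆ Metric.closedBall y r := by
        intro z hz
        have h1 : edist z y ≤ EMetric.diam (msupp μ) :=
          EMetric.edist_le_diam_of_mem (by rw [hsupp]; exact hz) (by rw [hsupp]; exact hyK)
        have h2 : edist z y ≤ ENNReal.ofReal r := h1.trans (not_lt.1 hlt)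
        exact Metric.mem_closedBall.2 ((edist_le_ofReal hrpos.le).1 h2)
      calc m ≤ 1 := by rw [← hofm₀]; exact ENNReal.ofReal_le_one.2 hm₀le1
        _ = μ K := hμK.symm
        _ ≤ M := measure_mono hsub
  have hMtop : M ≠ ⊤ := measure_ne_top μ _
  have hM0 : M ≠ 0 := fun h => hm0 (le_antisymm (h ▸ hM) zero_le)
  -- decomposition over P
  set F : Set (Euc d × Euc d) := Prod.fst ⁻¹' Metric.closedBall y r with hF
  have hFm : MeasurableSet F := measurable_fst measurableSet_closedBall
  have hπF : π F = M := coupling_fst_apply hfst measurableSet_closedBall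
  set w : Euc d → ℝ≥0∞ := fun p => π (F ∩ Prod.snd ⁻¹' {p}) with hw
  have hw_le : ∀ p ∈ P, w p ≤ (N : ℝ≥0∞)⁻¹ := by
    intro p hp
    calc w p ≤ π (Prod.snd ⁻¹' {p}) := measure_mono Set.inter_subset_right
      _ = unif P {p} := coupling_snd_apply hsnd (measurableSet_singleton p)
      _ = (N : ℝ≥0∞)⁻¹ := by rw [unif_singleton hp, hPN]
  have hw_sum : ∑ p ∈ P, w p = M := by
    have h := setLIntegral_snd_decomp hsnd (measurable_const (a := (1:ℝ≥0∞))) hFm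
    simp only [one_mul] at h
    rw [setLIntegral_one, hπF] at h
    exact h.symm
  -- choose the k nearest points
  obtain ⟨C, hCs, hCcard, hCmin⟩ :=
    exists_lower_subset (fun p : Euc d => edist x p ^ 2) k P (hPN ▸ hkN)
  set v : Euc d → ℝ≥0∞ := fun p => edist x p ^ 2 with hv
  have hkk : (k : ℝ≥0∞) * (k : ℝ≥0∞)⁻¹ = 1 := ENNReal.mul_inv_cancel hkne (by simp)
  have hkd2 : ENNReal.ofReal (kdist P k x) ^ 2 ≤ (k : ℝ≥0∞)⁻¹ * ∑ p ∈ C, v p := by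
    have h := (kdist_facts P k x (hPN ▸ hkN)).1 C (Finset.mem_powersetCard.2 ⟨hCs, hCcard⟩)
    calc ENNReal.ofReal (kdist P k x) ^ 2
        = ENNReal.ofReal (kdist P k x ^ 2) := by
          rw [ENNReal.ofReal_pow (kdist_nonneg P k x)]
      _ ≤ ENNReal.ofReal ((k : ℝ)⁻¹ * ∑ p ∈ C, ‖x - p‖ ^ 2) := ENNReal.ofReal_le_ofReal h
      _ = (k : ℝ≥0∞)⁻¹ * ∑ p ∈ C, v p := by
          rw [ENNReal.ofReal_mul (by positivity), hv, sum_edist_sq,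
            ENNReal.ofReal_inv_of_pos (by exact_mod_cast hk), ENNReal.ofReal_natCast]
  set w' : Euc d → ℝ≥0∞ := fun p => m * M⁻¹ * w p with hw'
  have hMinvM : M⁻¹ * M = 1 := ENNReal.inv_mul_cancel hM0 hMtop
  have hre : ∑ p ∈ C, (N : ℝ≥0∞)⁻¹ * v p ≤ ∑ p ∈ P, w' p * v p := by
    refine sum_smallest_le hCs v w' (ENNReal.inv_ne_top.2 hNne) ?_ ?_ hCmin
    · intro p hp
      calc w' p ≤ 1 * (N : ℝ≥0∞)⁻¹ := by
            refine mul_le_mul' ?_ (hw_le p hp)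
            calc m * M⁻¹ ≤ M * M⁻¹ := mul_le_mul_left hM _
              _ = 1 := by rw [mul_comm]; exact hMinvM
        _ = (N : ℝ≥0∞)⁻¹ := one_mul _
    · rw [hCcard]
      calc ∑ p ∈ P, w' p = m * M⁻¹ * ∑ p ∈ P, w p := by rw [Finset.mul_sum]
        _ = m * (M⁻¹ * M) := by rw [hw_sum, mul_assoc]
        _ = m := by rw [hMinvM, mul_one]
        _ = (k : ℝ≥0∞) * (N : ℝ≥0∞)⁻¹ := hm
  have hI : ∫⁻ z in F, edist x z.2 ^ 2 ∂π = ∑ p ∈ P, v p * w p :=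
    setLIntegral_snd_decomp hsnd ((measurable_const.edist measurable_id).pow_const 2) hFm
  have hkd2' : ENNReal.ofReal (kdist P k x) ^ 2 ≤
      M⁻¹ * ∫⁻ z in F, edist x z.2 ^ 2 ∂π := by
    have hmk : m * (k : ℝ≥0∞)⁻¹ = (N : ℝ≥0∞)⁻¹ := by
      rw [hm, mul_comm (k : ℝ≥0∞), mul_assoc, hkk, mul_one]
    have h1 : m * ENNReal.ofReal (kdist P k x) ^ 2 ≤
        m * (M⁻¹ * ∫⁻ z in F, edist x z.2 ^ 2 ∂π) := by
      calc m * ENNReal.ofReal (kdist P k x) ^ 2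
          ≤ m * ((k : ℝ≥0∞)⁻¹ * ∑ p ∈ C, v p) := mul_le_mul_right hkd2 m
        _ = ∑ p ∈ C, (N : ℝ≥0∞)⁻¹ * v p := by
            rw [← mul_assoc, hmk, Finset.mul_sum]
        _ ≤ ∑ p ∈ P, w' p * v p := hre
        _ = m * (M⁻¹ * ∑ p ∈ P, v p * w p) := by
            rw [Finset.mul_sum, Finset.mul_sum]
            exact Finset.sum_congr rfl fun p _ => by rw [hw']; ring
        _ = m * (M⁻¹ * ∫⁻ z in F, edist x z.2 ^ 2 ∂π) := by rw [hI]
    exact (ENNReal.mul_le_mul_iff_right hm0 hmtop).1 h1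
  have hkd1 : ENNReal.ofReal (kdist P k x) ≤
      (M⁻¹) ^ (1/2 : ℝ) * (∫⁻ z in F, edist x z.2 ^ 2 ∂π) ^ (1/2 : ℝ) := by
    calc ENNReal.ofReal (kdist P k x)
        = (ENNReal.ofReal (kdist P k x) ^ 2) ^ (1/2 : ℝ) := (sqrt_sq' _).symm
      _ ≤ (M⁻¹ * ∫⁻ z in F, edist x z.2 ^ 2 ∂π) ^ (1/2 : ℝ) :=
          ENNReal.rpow_le_rpow hkd2' (by norm_num)
      _ = _ := ENNReal.mul_rpow_of_nonneg _ _ (by norm_num)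
  -- Minkowski
  set dr : ℝ := Metric.infDist x K + r with hdr
  have hdrnn : 0 ≤ dr := add_nonneg Metric.infDist_nonneg hrpos.le
  have haeF : ∀ᵐ z ∂(π.restrict F),
      edist x z.2 ^ 2 ≤ (ENNReal.ofReal dr + edist z.1 z.2) ^ 2 := by
    filter_upwards [ae_restrict_mem hFm] with z hz
    have hz1 : dist z.1 y ≤ r := Metric.mem_closedBall.1 hz
    have hxz1 : dist x z.1 ≤ dr := by
      calc dist x z.1 ≤ dist x y + dist y z.1 := dist_triangle _ _ _
        _ ≤ dist x y + r := by rw [dist_comm y z.1]; exact add_le_add_right hz1 _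
        _ = dr := by rw [hdr, hxy]
    have h1 : dist x z.2 ≤ dr + dist z.1 z.2 := by
      calc dist x z.2 ≤ dist x z.1 + dist z.1 z.2 := dist_triangle _ _ _
        _ ≤ dr + dist z.1 z.2 := add_le_add_left hxz1 _
    have h2 : edist x z.2 ≤ ENNReal.ofReal dr + edist z.1 z.2 := by
      rw [edist_dist, edist_dist]
      refine le_trans (ENNReal.ofReal_le_ofReal h1) ?_
      rw [ENNReal.ofReal_add hdrnn dist_nonneg]
    rw [pow_two, pow_two]; exact mul_le_mul' h2 h2
  have hgmeas : Measurable fun z : Euc d × Euc d => edist z.1 z.2 :=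
    measurable_fst.edist measurable_snd
  have hmink := ENNReal.lintegral_Lp_add_le (μ := π.restrict F)
    (measurable_const (a := ENNReal.ofReal dr)).aemeasurable hgmeas.aemeasurable one_le_two
  simp only [ENNReal.rpow_two, Pi.add_apply] at hmink
  have hIle : (∫⁻ z in F, edist x z.2 ^ 2 ∂π) ^ (1/2 : ℝ) ≤
      ENNReal.ofReal dr * M ^ (1/2 : ℝ) + c ^ (1/2 : ℝ) := by
    calc (∫⁻ z in F, edist x z.2 ^ 2 ∂π) ^ (1/2 : ℝ)
        ≤ (∫⁻ z in F, (ENNReal.ofReal dr + edist z.1 z.2) ^ 2 ∂π) ^ (1/2 : ℝ) :=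
          ENNReal.rpow_le_rpow (lintegral_mono_ae haeF) (by norm_num)
      _ ≤ (∫⁻ _z in F, ENNReal.ofReal dr ^ 2 ∂π) ^ (1/2 : ℝ) +
            (∫⁻ z in F, edist z.1 z.2 ^ 2 ∂π) ^ (1/2 : ℝ) := hmink
      _ ≤ ENNReal.ofReal dr * M ^ (1/2 : ℝ) + c ^ (1/2 : ℝ) := by
          refine add_le_add (le_of_eq ?_) ?_
          · rw [setLIntegral_const, hπF,
              ENNReal.mul_rpow_of_nonneg (ENNReal.ofReal dr ^ 2) M (by norm_num), sqrt_sq']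
          · exact ENNReal.rpow_le_rpow (setLIntegral_le_lintegral _ _) (by norm_num)
  have hMr0 : M ^ (1/2 : ℝ) ≠ 0 := by simp [ENNReal.rpow_eq_zero_iff, hM0, hMtop]
  have hMrtop : M ^ (1/2 : ℝ) ≠ ⊤ := ENNReal.rpow_ne_top_of_nonneg (by norm_num) hMtop
  calc ENNReal.ofReal (kdist P k x)
      ≤ (M⁻¹) ^ (1/2 : ℝ) * (ENNReal.ofReal dr * M ^ (1/2 : ℝ) + c ^ (1/2 : ℝ)) :=
        le_trans hkd1 (mul_le_mul_right hIle _)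
    _ = ENNReal.ofReal dr * ((M ^ (1/2 : ℝ))⁻¹ * M ^ (1/2 : ℝ)) +
          (M⁻¹) ^ (1/2 : ℝ) * c ^ (1/2 : ℝ) := by
        rw [ENNReal.inv_rpow]; ring
    _ = ENNReal.ofReal dr + (M⁻¹) ^ (1/2 : ℝ) * c ^ (1/2 : ℝ) := by
        rw [ENNReal.inv_mul_cancel hMr0 hMrtop, mul_one]
    _ ≤ ENNReal.ofReal dr + m ^ (-(1/2) : ℝ) * c ^ (1/2 : ℝ) := by
        gcongr
        rw [ENNReal.rpow_neg, ← ENNReal.inv_rpow]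
        exact ENNReal.rpow_le_rpow (ENNReal.inv_le_inv.2 hM) (by norm_num)

lemma W2_ne_top (μ : Measure (Euc d)) [IsProbabilityMeasure μ]
    {K : Set (Euc d)} (hK : IsCompact K) (hsupp : msupp μ = K)
    (P : Finset (Euc d)) (hP : P.Nonempty) : W2 μ (unif P) ≠ ⊤ := by
  haveI := unif_isProb P hP
  set π₀ : Measure (Euc d × Euc d) := μ.prod (unif P) with hπ₀
  haveI : IsProbabilityMeasure π₀ := by rw [hπ₀]; infer_instance
  have hfst : π₀.map Prod.fst = μ := by
    rw [hπ₀, Measure.map_fst_prod, measure_univ, one_smul]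
  have hsnd : π₀.map Prod.snd = unif P := by
    rw [hπ₀, Measure.map_snd_prod, measure_univ, one_smul]
  have hK0 : μ Kᶜ = 0 := by rw [← hsupp]; exact measure_compl_msupp μ
  have hbd : Bornology.IsBounded (K ∪ ↑P : Set (Euc d)) :=
    hK.isBounded.union P.finite_toSet.isBounded
  set D := EMetric.diam (K ∪ ↑P : Set (Euc d)) with hD
  have hDtop : D ≠ ⊤ := hbd.ediam_ne_top
  have hae : ∀ᵐ z ∂π₀, edist z.1 z.2 ^ 2 ≤ D ^ 2 := by
    filter_upwards [coupling_ae_fst_mem hfst hK.isClosed.measurableSet hK0,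
      coupling_ae_snd_mem hsnd] with z h1 h2
    have := EMetric.edist_le_diam_of_mem (Set.mem_union_left _ h1) (Set.mem_union_right _ h2)
    rw [pow_two, pow_two]; exact mul_le_mul' this this
  have hcost : ∫⁻ z, edist z.1 z.2 ^ 2 ∂π₀ ≤ D ^ 2 := by
    calc ∫⁻ z, edist z.1 z.2 ^ 2 ∂π₀ ≤ ∫⁻ _z, D ^ 2 ∂π₀ := lintegral_mono_ae hae
      _ = D ^ 2 := by rw [lintegral_const, measure_univ, mul_one]
  have hWle : W2 μ (unif P) ≤ (D ^ 2) ^ (1/2 : ℝ) := by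
    calc W2 μ (unif P)
        ≤ ⨅ (_ : π₀.map Prod.fst = μ) (_ : π₀.map Prod.snd = unif P),
            (∫⁻ z, edist z.1 z.2 ^ 2 ∂π₀) ^ (1/2 : ℝ) := iInf_le _ π₀
      _ = (∫⁻ z, edist z.1 z.2 ^ 2 ∂π₀) ^ (1/2 : ℝ) := by rw [iInf_pos hfst, iInf_pos hsnd]
      _ ≤ (D ^ 2) ^ (1/2 : ℝ) := ENNReal.rpow_le_rpow hcost (by norm_num)
  exact ne_top_of_le_ne_top
    (ENNReal.rpow_ne_top_of_nonneg (by norm_num) (ENNReal.pow_ne_top hDtop)) hWle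

end main

/-- **Exact Bound.** If `μ` is a probability measure of dimension at most `ℓ`
(with constant `α`) and compact support `K`, then for `m₀ = k/N`,
`‖d_{P,k} - d_K‖_∞ ≤ m₀^{-1/2} W₂(μ, U_P) + α^{-1/ℓ} m₀^{1/ℓ}`. -/
theorem exact_bound {d : ℕ} (μ : Measure (EuclideanSpace ℝ (Fin d)))
    [IsProbabilityMeasure μ] (K : Set (EuclideanSpace ℝ (Fin d)))
    (hK : IsCompact K) (hsupp : msupp μ = K)
    (ℓ α : ℝ) (hℓ : 0 < ℓ) (hα : 0 < α) (hdim : HasDimLE μ ℓ α)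
    (N k : ℕ) (P : Finset (EuclideanSpace ℝ (Fin d))) (hPN : P.card = N)
    (hk : 1 ≤ k) (hkN : k ≤ N) (m₀ : ℝ) (hm₀ : m₀ = (k : ℝ) / N)
    (x : EuclideanSpace ℝ (Fin d)) :
    |kdist P k x - Metric.infDist x K| ≤
      m₀ ^ (-(1 : ℝ)/2) * (W2 μ (unif P)).toReal + α ^ (-(1/ℓ)) * m₀ ^ (1/ℓ) := by
  subst hm₀
  have hNpos : 0 < N := lt_of_lt_of_le hk hkN
  have hPne : P.Nonempty := by rw [← Finset.card_pos, hPN]; exact hNpos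
  have hK0 : μ Kᶜ = 0 := by rw [← hsupp]; exact measure_compl_msupp μ
  have hKm : MeasurableSet K := hK.isClosed.measurableSet
  set m₀ : ℝ := (k : ℝ) / N with hm₀
  have hm₀pos : 0 < m₀ := div_pos (by exact_mod_cast hk) (by exact_mod_cast hNpos)
  set W := W2 μ (unif P) with hWdef
  have hWtop : W ≠ ⊤ := W2_ne_top μ hK hsupp P hPne
  set m : ℝ≥0∞ := (k : ℝ≥0∞) * (N : ℝ≥0∞)⁻¹ with hm
  have hofm₀ : ENNReal.ofReal m₀ = m := by
    rw [hm₀, ENNReal.ofReal_div_of_pos (by exact_mod_cast hNpos), hm,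
      ENNReal.ofReal_natCast, ENNReal.ofReal_natCast, div_eq_mul_inv]
  set cE : ℝ≥0∞ := m ^ (-(1/2) : ℝ) with hcE
  have hcE_eq : cE = ENNReal.ofReal (m₀ ^ (-(1/2) : ℝ)) := by
    rw [hcE, ← hofm₀, ENNReal.ofReal_rpow_of_pos hm₀pos]
  have hcEtop : cE ≠ ⊤ := by rw [hcE_eq]; exact ENNReal.ofReal_ne_top
  have hexp : (-(1:ℝ)/2 : ℝ) = (-(1/2) : ℝ) := by norm_num
  have hcEtoReal : cE.toReal = m₀ ^ (-(1:ℝ)/2) := by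
    rw [hcE_eq, ENNReal.toReal_ofReal (Real.rpow_nonneg hm₀pos.le _), hexp]
  set rB : ℝ := α ^ (-(1/ℓ)) * m₀ ^ (1/ℓ) with hrB
  have hrBnn : 0 ≤ rB :=
    mul_nonneg (Real.rpow_nonneg hα.le _) (Real.rpow_nonneg hm₀pos.le _)
  refine _root_.le_of_forall_pos_le_add fun ε hε => ?_
  set δ : ℝ := ε * m₀ ^ ((1:ℝ)/2) with hδ
  have hδpos : 0 < δ := mul_pos hε (Real.rpow_pos_of_pos hm₀pos _)
  have hWlt : W < W + ENNReal.ofReal δ :=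
    ENNReal.lt_add_right hWtop (ENNReal.ofReal_pos.2 hδpos).ne'
  have h := hWlt
  rw [hWdef] at h
  unfold W2 at h
  simp only [iInf_lt_iff] at h
  obtain ⟨π, hfst, hsnd, hlt⟩ := h
  have h1e := coupling_lower (μ := μ) hKm hK0 hPN hk hkN hfst hsnd x
  have h2e := coupling_upper (μ := μ) hK hsupp hℓ hα hdim hPN hk hkN hfst hsnd x
  rw [← hm₀, ← hrB] at h2e
  set Q : ℝ≥0∞ := cE * (W + ENNReal.ofReal δ) with hQ
  have hq : m ^ (-(1/2) : ℝ) * (∫⁻ z, edist z.1 z.2 ^ 2 ∂π) ^ (1/2 : ℝ) ≤ Q :=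
    mul_le_mul_right hlt.le _
  have h1e' : ENNReal.ofReal (Metric.infDist x K) ≤ ENNReal.ofReal (kdist P k x) + Q :=
    le_trans h1e (add_le_add_right hq _)
  have h2e' : ENNReal.ofReal (kdist P k x) ≤
      ENNReal.ofReal (Metric.infDist x K + rB) + Q :=
    le_trans h2e (add_le_add_right hq _)
  have hQtop : Q ≠ ⊤ :=
    ENNReal.mul_ne_top hcEtop (ENNReal.add_ne_top.2 ⟨hWtop, ENNReal.ofReal_ne_top⟩)
  have hQto : Q.toReal = m₀ ^ (-(1:ℝ)/2) * (W.toReal + δ) := by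
    rw [hQ, ENNReal.toReal_mul, hcEtoReal,
      ENNReal.toReal_add hWtop ENNReal.ofReal_ne_top, ENNReal.toReal_ofReal hδpos.le]
  have hQval : Q.toReal = m₀ ^ (-(1:ℝ)/2) * W.toReal + ε := by
    rw [hQto, mul_add]
    congr 1
    have h1 : m₀ ^ (-(1:ℝ)/2) * m₀ ^ ((1:ℝ)/2) = 1 := by
      rw [← Real.rpow_add hm₀pos]; norm_num
    calc m₀ ^ (-(1:ℝ)/2) * δ = ε * (m₀ ^ (-(1:ℝ)/2) * m₀ ^ ((1:ℝ)/2)) := by rw [hδ]; ring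
      _ = ε := by rw [h1, mul_one]
  have hA : Metric.infDist x K ≤ kdist P k x + Q.toReal := by
    have h := ENNReal.toReal_mono (ENNReal.add_ne_top.2 ⟨ENNReal.ofReal_ne_top, hQtop⟩) h1e'
    rwa [ENNReal.toReal_add ENNReal.ofReal_ne_top hQtop,
      ENNReal.toReal_ofReal Metric.infDist_nonneg,
      ENNReal.toReal_ofReal (kdist_nonneg P k x)] at h
  have hB : kdist P k x ≤ (Metric.infDist x K + rB) + Q.toReal := by
    have h := ENNReal.toReal_mono (ENNReal.add_ne_top.2 ⟨ENNReal.ofReal_ne_top, hQtop⟩) h2e'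
    rwa [ENNReal.toReal_add ENNReal.ofReal_ne_top hQtop,
      ENNReal.toReal_ofReal (add_nonneg Metric.infDist_nonneg hrBnn),
      ENNReal.toReal_ofReal (kdist_nonneg P k x)] at h
  rw [abs_sub_le_iff]
  constructor
  · linarith [hQval, hB]
  · linarith [hQval, hA, hrBnn]


end
end

section
/- Let μ be a probability measure on ℝ^d with compact support K, of dimension at most ℓ with constant α > 0, and suppose K contains at least two points. Then for every ε with 0 < ε < diam(K), the complexity of μ satisfies N_μ(ε) ≤ 5^ℓ · α^{−1} · ε^{−ℓ}. -/
open MeasureTheory Metric Finset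
open scoped ENNReal NNReal

noncomputable section

/-- The complexity `N_μ(ε)` of a probability measure `μ` at scale `ε`: the minimum number
of points in the support of a finitely supported probability measure `ν` with
`W₂(μ,ν) ≤ ε` (as an extended number, `∞` if no such measure exists). -/
def complexity {d : ℕ} (μ : Measure (EuclideanSpace ℝ (Fin d))) (ε : ℝ) : ℝ≥0∞ :=
  sInf { c : ℝ≥0∞ | ∃ (S : Finset (EuclideanSpace ℝ (Fin d)))
    (ν : Measure (EuclideanSpace ℝ (Fin d))), IsProbabilityMeasure ν ∧
      ν (↑S)ᶜ = 0 ∧ W2 μ ν ≤ ENNReal.ofReal ε ∧ c = S.card }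

/-! ### Auxiliary construction: picking a nearby point from a list -/

open scoped Classical in
/-- Pick the first point of `l` within distance `ε` of `x`, defaulting to `s₀`. -/
def pickPt {d : ℕ} (ε : ℝ) (s₀ : EuclideanSpace ℝ (Fin d)) :
    List (EuclideanSpace ℝ (Fin d)) → EuclideanSpace ℝ (Fin d) → EuclideanSpace ℝ (Fin d)
  | [] => fun _ => s₀
  | s :: rest => fun x => if dist x s < ε then s else pickPt ε s₀ rest x

lemma pickPt_mem {d : ℕ} (ε : ℝ) (s₀ : EuclideanSpace ℝ (Fin d))
    (l : List (EuclideanSpace ℝ (Fin d))) (x : EuclideanSpace ℝ (Fin d)) :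
    pickPt ε s₀ l x = s₀ ∨ pickPt ε s₀ l x ∈ l := by
  induction l with
  | nil => left; rfl
  | cons s rest ih =>
    by_cases hs : dist x s < ε
    · right; simp [pickPt, if_pos hs]
    · rcases ih with h | h
      · left; simp [pickPt, if_neg hs, h]
      · right; simp [pickPt, if_neg hs, h]

lemma pickPt_dist {d : ℕ} {ε : ℝ} (s₀ : EuclideanSpace ℝ (Fin d))
    {l : List (EuclideanSpace ℝ (Fin d))} {x : EuclideanSpace ℝ (Fin d)}
    (h : ∃ s ∈ l, dist x s < ε) : dist x (pickPt ε s₀ l x) < ε := by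
  induction l with
  | nil => simp at h
  | cons s rest ih =>
    by_cases hs : dist x s < ε
    · simpa [pickPt, if_pos hs] using hs
    · rcases h with ⟨t, ht, hd⟩
      rcases List.mem_cons.mp ht with rfl | ht
      · exact absurd hd hs
      · simpa [pickPt, if_neg hs] using ih ⟨t, ht, hd⟩

lemma pickPt_measurable {d : ℕ} (ε : ℝ) (s₀ : EuclideanSpace ℝ (Fin d))
    (l : List (EuclideanSpace ℝ (Fin d))) : Measurable (pickPt ε s₀ l) := by
  induction l with
  | nil => exact measurable_const
  | cons s rest ih =>
    have h : Measurable fun x => if dist x s < ε then s else pickPt ε s₀ rest x :=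
      Measurable.ite (p := fun x => dist x s < ε)
        (show MeasurableSet (Metric.ball s ε) from measurableSet_ball)
        measurable_const ih
    exact h

/-- If `μ` is a probability measure with compact support `K` (containing
at least two points) of dimension at most `ℓ` with constant `α`, then for every
`0 < ε < diam K`, the complexity satisfies `N_μ(ε) ≤ 5^ℓ α⁻¹ ε^{-ℓ}`. -/
theorem complexity_bound {d : ℕ} (μ : Measure (EuclideanSpace ℝ (Fin d)))
    [IsProbabilityMeasure μ] (K : Set (EuclideanSpace ℝ (Fin d)))
    (hK : IsCompact K) (hsupp : msupp μ = K)
    (htwo : ∃ x ∈ K, ∃ y ∈ K, x ≠ y)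
    (ℓ α : ℝ) (hℓ : 0 < ℓ) (hα : 0 < α) (hdim : HasDimLE μ ℓ α)
    (ε : ℝ) (hε : 0 < ε) (hεd : ENNReal.ofReal ε < EMetric.diam K) :
    complexity μ ε ≤ ENNReal.ofReal (5 ^ ℓ * α⁻¹ * ε ^ (-ℓ)) := by
  classical
  obtain ⟨x₀, hx₀, y₀, hy₀, hxy⟩ := htwo
  -- the complement of the support is null
  have hKc : μ Kᶜ = 0 := by
    apply measure_null_of_locally_null
    intro x hx
    have hx' : x ∉ msupp μ := by rw [hsupp]; exact hx
    simp only [msupp, Set.mem_setOf_eq] at hx'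
    push_neg at hx'
    obtain ⟨U, hUopen, hxU, hU⟩ := hx'
    exact ⟨U, mem_nhdsWithin_of_mem_nhds (hUopen.mem_nhds hxU),
      le_zero_iff.mp hU⟩
  have hKae : ∀ᵐ x ∂μ, x ∈ K := by
    rw [ae_iff]
    exact hKc
  -- the measure lower bound for small closed balls
  set c : ℝ := α * (ε / 5) ^ ℓ with hc
  have hε5 : (0 : ℝ) < ε / 5 := by linarith
  have hc0 : 0 < c := mul_pos hα (Real.rpow_pos_of_pos hε5 ℓ)
  have hεK : ∀ p ∈ K, ENNReal.ofReal c ≤ μ (closedBall p (ε / 5)) := by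
    intro p hp
    refine hdim p (by rw [hsupp]; exact hp) (ε / 5) hε5 ?_
    rw [hsupp]
    exact lt_of_le_of_lt (ENNReal.ofReal_le_ofReal (by linarith)) hεd
  -- cardinality bound for ε-separated subsets of K
  have hcard : ∀ S : Finset (EuclideanSpace ℝ (Fin d)), ↑S ⊆ K →
      ((S : Set (EuclideanSpace ℝ (Fin d))).Pairwise fun a b => ε ≤ dist a b) →
      (S.card : ℝ) * c ≤ 1 := by
    intro S hSK hSsep
    have hdisj : (↑S : Set (EuclideanSpace ℝ (Fin d))).PairwiseDisjoint
        (fun s => closedBall s (ε / 5)) := by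
      intro a ha b hb hab
      have := hSsep ha hb hab
      exact closedBall_disjoint_closedBall (by linarith)
    have hmeas : μ (⋃ s ∈ S, closedBall s (ε / 5)) = ∑ s ∈ S, μ (closedBall s (ε / 5)) :=
      measure_biUnion_finset hdisj (fun b _ => measurableSet_closedBall)
    have h1 : (S.card : ℝ≥0∞) * ENNReal.ofReal c ≤ 1 := by
      calc (S.card : ℝ≥0∞) * ENNReal.ofReal c = ∑ _s ∈ S, ENNReal.ofReal c := by
            rw [Finset.sum_const, nsmul_eq_mul]
        _ ≤ ∑ s ∈ S, μ (closedBall s (ε / 5)) :=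
            Finset.sum_le_sum fun s hs => hεK s (hSK hs)
        _ = μ (⋃ s ∈ S, closedBall s (ε / 5)) := hmeas.symm
        _ ≤ 1 := prob_le_one
    refine ENNReal.ofReal_le_one.mp ?_
    rw [ENNReal.ofReal_mul (by positivity), ENNReal.ofReal_natCast]
    exact h1
  -- a maximal ε-separated subset of K
  set 𝒮 : Set (Finset (EuclideanSpace ℝ (Fin d))) :=
    {S | ↑S ⊆ K ∧ (S : Set (EuclideanSpace ℝ (Fin d))).Pairwise fun a b => ε ≤ dist a b}
    with h𝒮
  have h𝒮x₀ : ({x₀} : Finset (EuclideanSpace ℝ (Fin d))) ∈ 𝒮 := by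
    constructor
    · simpa using hx₀
    · simp
  set T : Set ℕ := Finset.card '' 𝒮 with hT
  have hTne : T.Nonempty := ⟨1, ⟨{x₀}, h𝒮x₀, by simp⟩⟩
  have hTbdd : BddAbove T := by
    refine ⟨⌈c⁻¹⌉₊, ?_⟩
    rintro n ⟨S, hS, rfl⟩
    have h1 : (S.card : ℝ) ≤ 1 / c := (le_div_iff₀ hc0).mpr (hcard S hS.1 hS.2)
    rw [one_div] at h1
    exact_mod_cast h1.trans (Nat.le_ceil _)
  obtain ⟨S, hS𝒮, hScard⟩ := Nat.sSup_mem hTne hTbdd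
  -- maximality gives a cover of K by ε-balls centered in S
  have hone : 1 ≤ sSup T := le_csSup hTbdd ⟨{x₀}, h𝒮x₀, by simp⟩
  have hSne : S.Nonempty := Finset.card_pos.mp (by rw [hScard]; exact hone)
  have hcover : ∀ x ∈ K, ∃ s ∈ S, dist x s < ε := by
    intro x hx
    by_contra hcon
    push_neg at hcon
    have hxS : x ∉ S := by
      intro hxS
      have h0 := hcon x hxS
      rw [dist_self] at h0
      linarith
    have hins : insert x S ∈ 𝒮 := by
      constructor
      · rw [Finset.coe_insert]
        exact Set.insert_subset_iff.mpr ⟨hx, hS𝒮.1⟩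
      · rw [Finset.coe_insert]
        haveI : Std.Symm (fun a b : EuclideanSpace ℝ (Fin d) => ε ≤ dist a b) := ⟨by
          intro a b h
          rw [dist_comm]
          exact h⟩
        refine (Set.pairwise_insert_of_symmetric).mpr
          ⟨hS𝒮.2, fun b hb _ => hcon b (Finset.mem_coe.mp hb)⟩
    have hle : (insert x S).card ≤ sSup T := le_csSup hTbdd ⟨_, hins, rfl⟩
    rw [Finset.card_insert_of_notMem hxS, hScard] at hle
    omega
  obtain ⟨s₀, hs₀⟩ := hSne
  -- the transport map
  set f := pickPt ε s₀ S.toList with hf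
  have hfmeas : Measurable f := pickPt_measurable ε s₀ _
  have hfS : ∀ x, f x ∈ S := by
    intro x
    rcases pickPt_mem ε s₀ S.toList x with h | h
    · rw [hf] at *; rw [h]; exact hs₀
    · exact Finset.mem_toList.mp h
  have hfdist : ∀ x ∈ K, dist x (f x) < ε := by
    intro x hx
    obtain ⟨s, hs, hd⟩ := hcover x hx
    exact pickPt_dist s₀ ⟨s, Finset.mem_toList.mpr hs, hd⟩
  set ν := μ.map f with hν
  have hνprob : IsProbabilityMeasure ν := Measure.isProbabilityMeasure_map hfmeas.aemeasurable
  have hνS : ν (↑S)ᶜ = 0 := by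
    rw [hν, Measure.map_apply hfmeas S.measurableSet.compl]
    have hpre : f ⁻¹' (↑S)ᶜ = ∅ := by
      ext x
      simp [hfS x]
    rw [hpre, measure_empty]
  -- the coupling
  set g : EuclideanSpace ℝ (Fin d) → EuclideanSpace ℝ (Fin d) × EuclideanSpace ℝ (Fin d) :=
    fun x => (x, f x) with hg
  have hgmeas : Measurable g := measurable_id.prodMk hfmeas
  set π := μ.map g with hπ
  have hfst : π.map Prod.fst = μ := by
    rw [hπ, Measure.map_map measurable_fst hgmeas]
    have : Prod.fst ∘ g = id := rfl
    rw [this, Measure.map_id]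
  have hsnd : π.map Prod.snd = ν := by
    rw [hπ, Measure.map_map measurable_snd hgmeas]
    rfl
  have hcost : (∫⁻ p, edist p.1 p.2 ^ 2 ∂π) ≤ ENNReal.ofReal ε ^ 2 := by
    rw [hπ, lintegral_map ((measurable_fst.edist measurable_snd).pow_const 2) hgmeas]
    calc ∫⁻ x, edist x (f x) ^ 2 ∂μ ≤ ∫⁻ _, ENNReal.ofReal ε ^ 2 ∂μ := by
          refine lintegral_mono_ae ?_
          filter_upwards [hKae] with x hx
          refine pow_le_pow_left₀ (zero_le) ?_ 2
          rw [edist_dist]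
          exact ENNReal.ofReal_le_ofReal (hfdist x hx).le
      _ = ENNReal.ofReal ε ^ 2 := by simp
  have hW2 : W2 μ ν ≤ ENNReal.ofReal ε := by
    have h1 : W2 μ ν ≤ (∫⁻ p, edist p.1 p.2 ^ 2 ∂π) ^ (1/2 : ℝ) :=
      iInf_le_of_le π (iInf_le_of_le hfst (iInf_le _ hsnd))
    refine h1.trans ?_
    calc (∫⁻ p, edist p.1 p.2 ^ 2 ∂π) ^ (1/2 : ℝ)
        ≤ (ENNReal.ofReal ε ^ 2) ^ (1/2 : ℝ) := ENNReal.rpow_le_rpow hcost (by norm_num)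
      _ = ENNReal.ofReal ε := by
          rw [← ENNReal.rpow_natCast (ENNReal.ofReal ε) 2, ← ENNReal.rpow_mul]
          norm_num
  -- conclude
  have hmem : complexity μ ε ≤ (S.card : ℝ≥0∞) := by
    unfold complexity
    exact sInf_le ⟨S, ν, hνprob, hνS, hW2, rfl⟩
  refine hmem.trans ?_
  have hε𝓁 : (0 : ℝ) < ε ^ ℓ := Real.rpow_pos_of_pos hε ℓ
  have h5𝓁 : (0 : ℝ) < (5 : ℝ) ^ ℓ := Real.rpow_pos_of_pos (by norm_num) ℓ
  have hB : (S.card : ℝ) ≤ 5 ^ ℓ * α⁻¹ * ε ^ (-ℓ) := by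
    have h1 : (S.card : ℝ) ≤ 1 / c := (le_div_iff₀ hc0).mpr (hcard S hS𝒮.1 hS𝒮.2)
    refine h1.trans_eq ?_
    rw [hc, Real.div_rpow hε.le (by norm_num : (0:ℝ) ≤ 5), Real.rpow_neg hε.le]
    field_simp
  calc (S.card : ℝ≥0∞) = ENNReal.ofReal (S.card : ℝ) := (ENNReal.ofReal_natCast _).symm
    _ ≤ ENNReal.ofReal (5 ^ ℓ * α⁻¹ * ε ^ (-ℓ)) := ENNReal.ofReal_le_ofReal hB

end
end

section
/- Let P ⊆ ℝ^d be a finite set of N points, let 1 ≤ k ≤ N be an integer, set m₀ = k/N, and let U_P be the uniform probability measure on P. Then for every x ∈ ℝ^d, the distance to the measure U_P with parameter m₀ satisfies d_{U_P,m₀}(x)² = min over subsets C ⊆ P with |C| = k of (1/k) Σ_{p∈C} ‖x − p‖²; i.e., d_{U_P,m₀}(x) is the square root of the average squared distance from x to its k nearest neighbors in P. -/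
open MeasureTheory Metric Finset
open scoped ENNReal NNReal

noncomputable section

/-- `δ_{μ,m}(x)`: the radius of the smallest closed ball centered at `x` carrying
`μ`-mass at least `m`. -/
def deltam {d : ℕ} (μ : Measure (EuclideanSpace ℝ (Fin d))) (m : ℝ)
    (x : EuclideanSpace ℝ (Fin d)) : ℝ :=
  sInf { r : ℝ | 0 ≤ r ∧ ENNReal.ofReal m ≤ μ (Metric.closedBall x r) }

/-- The distance to the measure `μ` with mass parameter `m₀`:
`d_{μ,m₀}(x) = (m₀⁻¹ ∫_0^{m₀} δ_{μ,m}(x)² dm)^{1/2}`. -/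
def dtm {d : ℕ} (μ : Measure (EuclideanSpace ℝ (Fin d))) (m₀ : ℝ)
    (x : EuclideanSpace ℝ (Fin d)) : ℝ :=
  Real.sqrt (m₀⁻¹ * ∫ m in Set.Ioc (0 : ℝ) m₀, (deltam μ m x) ^ 2)

/-- For a strictly monotone map of `Fin`s, the `j`-th value is at least `j`. -/
lemma auxStrictMonoLe {k n : ℕ} (f : Fin k → Fin n) (hf : StrictMono f) :
    ∀ j : Fin k, (j : ℕ) ≤ (f j : ℕ) := by
  intro j
  induction' hj : (j : ℕ) with m ihm generalizing j
  · omega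
  · have hjk : (j : ℕ) < k := j.2
    have hm : m < k := by omega
    have h1 : (⟨m, hm⟩ : Fin k) < j := by rw [Fin.lt_def]; simp; omega
    have h2 := ihm ⟨m, hm⟩ rfl
    have h3 := hf h1
    rw [Fin.lt_def] at h3
    omega

/-- The sum of the `k` smallest values of a monotone nonnegative function dominates. -/
lemma auxSumMin {n k : ℕ} (hkn : k ≤ n) (g : Fin n → ℝ) (hg : Monotone g)
    (hg0 : ∀ i, 0 ≤ g i) (I : Finset (Fin n)) (hI : I.card = k) :
    ∑ j : Fin k, g (Fin.castLE hkn j) ^ 2 ≤ ∑ i ∈ I, g i ^ 2 := by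
  classical
  have hIim : I = Finset.image (fun j => I.orderEmbOfFin hI j) Finset.univ := by
    apply Finset.coe_injective
    rw [Finset.coe_image, Finset.coe_univ, Set.image_univ]
    exact (Finset.range_orderEmbOfFin I hI).symm
  conv_rhs => rw [hIim]
  rw [Finset.sum_image (by intro a _ b _ h; exact (I.orderEmbOfFin hI).injective h)]
  apply Finset.sum_le_sum
  intro j _
  have h1 : (j : ℕ) ≤ (I.orderEmbOfFin hI j : ℕ) :=
    auxStrictMonoLe _ (I.orderEmbOfFin hI).strictMono j
  have h2 : g (Fin.castLE hkn j) ≤ g (I.orderEmbOfFin hI j) := by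
    apply hg
    rw [Fin.le_def]
    simpa using h1
  exact pow_le_pow_left₀ (hg0 _) h2 2

/-- For the uniform measure on a set `P` of `N` points and `m₀ = k/N`,
the squared distance to the measure at `x` is the minimum, over `k`-point subsets `C ⊆ P`,
of the average squared distance from `x` to the points of `C`; i.e. `d_{U_P,m₀}(x)` is the
square root of the average squared distance from `x` to its `k` nearest neighbors in `P`. -/
theorem dtm_unif_eq_kdist_sq {d : ℕ} (N k : ℕ)
    (P : Finset (EuclideanSpace ℝ (Fin d))) (hPN : P.card = N)
    (hk : 1 ≤ k) (hkN : k ≤ N) (x : EuclideanSpace ℝ (Fin d)) :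
    (dtm (unif P) ((k : ℝ) / N) x) ^ 2 =
      sInf { y : ℝ | ∃ C ∈ P.powersetCard k, y = (k : ℝ)⁻¹ * ∑ p ∈ C, ‖x - p‖ ^ 2 } := by
  classical
  subst hPN
  have hn0 : 0 < P.card := lt_of_lt_of_le hk hkN
  have hnR : (0:ℝ) < P.card := by exact_mod_cast hn0
  have hkR : (0:ℝ) < k := by exact_mod_cast hk
  -- A monotone enumeration of the distances from `x` to the points of `P`.
  obtain ⟨g, q, hg, hg0, hq_inj, hq_norm, hq_memP⟩ :
      ∃ (g : Fin P.card → ℝ) (q : Fin P.card → EuclideanSpace ℝ (Fin d)),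
        Monotone g ∧ (∀ i, 0 ≤ g i) ∧ Function.Injective q ∧
        (∀ i, ‖x - q i‖ = g i) ∧ (∀ i, q i ∈ P) := by
    set e := P.equivFin with he
    set f₀ : Fin P.card → ℝ := fun i => ‖x - (e.symm i : EuclideanSpace ℝ (Fin d))‖ with hf₀
    exact ⟨f₀ ∘ Tuple.sort f₀, fun i => ↑(e.symm (Tuple.sort f₀ i)),
      Tuple.monotone_sort f₀, fun i => norm_nonneg _,
      fun i j h => (Tuple.sort f₀).injective (e.symm.injective (Subtype.coe_injective h)),
      fun i => rfl, fun i => (e.symm (Tuple.sort f₀ i)).2⟩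
  -- `P` is the image of the enumeration.
  have hPq : P = Finset.image q Finset.univ := by
    refine (Finset.eq_of_subset_of_card_le ?_ ?_).symm
    · intro p hp
      rw [Finset.mem_image] at hp
      obtain ⟨i, _, rfl⟩ := hp
      exact hq_memP i
    · rw [Finset.card_image_of_injective _ hq_inj, Finset.card_univ, Fintype.card_fin]
  -- Counting points in balls.
  have hcard : ∀ r : ℝ, (P.filter fun p => dist p x ≤ r).card
      = (Finset.univ.filter fun i => g i ≤ r).card := by
    intro r
    conv_lhs => rw [hPq]
    rw [Finset.filter_image, Finset.card_image_of_injective _ hq_inj]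
    congr 1
    ext i
    simp only [Finset.mem_filter, Finset.mem_univ, true_and]
    rw [dist_eq_norm, norm_sub_rev, hq_norm i]
  -- The measure of closed balls.
  have hμ : ∀ r : ℝ, unif P (Metric.closedBall x r)
      = ((P.filter fun p => dist p x ≤ r).card : ℝ≥0∞) / P.card := by
    intro r
    rw [unif, Measure.smul_apply, Measure.finset_sum_apply, smul_eq_mul]
    simp_rw [Measure.dirac_apply' _ measurableSet_closedBall, Set.indicator_apply,
      Pi.one_apply, mem_closedBall]
    rw [Finset.sum_boole, ENNReal.div_eq_inv_mul]
  -- The value of `deltam` on each interval.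
  have hδ : ∀ (j : ℕ) (hj : j < P.card) (m : ℝ), (j:ℝ)/P.card < m → m ≤ ((j:ℝ)+1)/P.card →
      deltam (unif P) m x = g ⟨j, hj⟩ := by
    intro j hj m hm1 hm2
    have hm0 : 0 ≤ m := le_trans (by positivity) hm1.le
    have hiff : ∀ r : ℝ, (ENNReal.ofReal m ≤ unif P (Metric.closedBall x r)) ↔ g ⟨j, hj⟩ ≤ r := by
      intro r
      rw [hμ r, hcard r]
      set c := (Finset.univ.filter fun i => g i ≤ r).card with hc
      have step1 : (ENNReal.ofReal m ≤ (c : ℝ≥0∞) / P.card) ↔ m * P.card ≤ (c:ℝ) := by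
        rw [ENNReal.le_div_iff_mul_le (Or.inl (by exact_mod_cast hn0.ne'))
          (Or.inl (ENNReal.natCast_ne_top _))]
        rw [show ((P.card : ℝ≥0∞)) = ENNReal.ofReal (P.card : ℝ) by
              rw [ENNReal.ofReal_natCast],
          ← ENNReal.ofReal_mul hm0,
          show ((c : ℝ≥0∞)) = ENNReal.ofReal (c : ℝ) by rw [ENNReal.ofReal_natCast]]
        exact ENNReal.ofReal_le_ofReal_iff (by positivity)
      have step2 : (m * P.card ≤ (c:ℝ)) ↔ j + 1 ≤ c := by
        constructor
        · intro h
          have : (j:ℝ) < m * P.card := by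
            have := (div_lt_iff₀ hnR).mp hm1
            linarith
          have : (j:ℝ) < (c:ℝ) := lt_of_lt_of_le this h
          exact_mod_cast Nat.succ_le_of_lt (by exact_mod_cast this)
        · intro h
          have h1 : m * P.card ≤ (j:ℝ) + 1 := by
            have := (le_div_iff₀ hnR).mp hm2
            linarith
          have h2 : (j:ℝ) + 1 ≤ (c:ℝ) := by exact_mod_cast h
          linarith
      have step3 : (j + 1 ≤ c) ↔ g ⟨j, hj⟩ ≤ r := by
        constructor
        · intro h
          by_contra hr
          push_neg at hr
          have hsub : (Finset.univ.filter fun i => g i ≤ r) ⊆ Finset.Iio (⟨j, hj⟩ : Fin P.card) := by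
            intro i hi
            rw [Finset.mem_filter] at hi
            rw [Finset.mem_Iio]
            by_contra hij
            push_neg at hij
            exact absurd (le_trans (hg hij) hi.2) (not_le.2 hr)
          have := Finset.card_le_card hsub
          rw [Fin.card_Iio] at this
          simp only at this
          omega
        · intro h
          have hsub : Finset.Iic (⟨j, hj⟩ : Fin P.card) ⊆ Finset.univ.filter fun i => g i ≤ r := by
            intro i hi
            rw [Finset.mem_Iic] at hi
            rw [Finset.mem_filter]
            exact ⟨Finset.mem_univ _, le_trans (hg hi) h⟩
          have := Finset.card_le_card hsub
          rw [Fin.card_Iic] at this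
          simp only at this
          omega
      rw [step1, step2, step3]
    have hset : {r : ℝ | 0 ≤ r ∧ ENNReal.ofReal m ≤ unif P (Metric.closedBall x r)}
        = Set.Ici (g ⟨j, hj⟩) := by
      ext r
      simp only [Set.mem_setOf_eq, Set.mem_Ici, hiff r]
      exact ⟨fun h => h.2, fun h => ⟨le_trans (hg0 _) h, h⟩⟩
    rw [deltam, hset, csInf_Ici]
  -- An abstract version of `g` indexed by naturals.
  obtain ⟨G, hG⟩ : ∃ G : ℕ → ℝ, ∀ (j : ℕ) (h : j < P.card), G j = g ⟨j, h⟩ :=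
    ⟨fun j => if h : j < P.card then g ⟨j, h⟩ else 0, fun j h => dif_pos h⟩
  -- The key integral computation, by induction.
  have key : ∀ K : ℕ, K ≤ P.card →
      IntegrableOn (fun m => (deltam (unif P) m x) ^ 2) (Set.Ioc (0:ℝ) ((K:ℝ)/P.card)) volume ∧
      (∫ m in Set.Ioc (0:ℝ) ((K:ℝ)/P.card), (deltam (unif P) m x) ^ 2)
        = (∑ j ∈ Finset.range K, G j ^ 2) / P.card := by
    intro K
    induction K with
    | zero =>
      intro _
      constructor
      · simp
      · simp
    | succ K ih =>
      intro hK1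
      have hKlt : K < P.card := hK1
      obtain ⟨ihI, ihV⟩ := ih (Nat.le_of_succ_le hK1)
      have h1 : (0:ℝ) ≤ (K:ℝ)/P.card := by positivity
      have h2 : (K:ℝ)/P.card ≤ ((K:ℝ)+1)/P.card := by
        gcongr <;> linarith
      have hcast : (((K+1 : ℕ)):ℝ) = (K:ℝ) + 1 := by push_cast; ring
      have hconst : Set.EqOn (fun m => (deltam (unif P) m x) ^ 2) (fun _ => G K ^ 2)
          (Set.Ioc ((K:ℝ)/P.card) (((K:ℝ)+1)/P.card)) := by
        intro m hm
        simp only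
        rw [hδ K hKlt m hm.1 hm.2, hG K hKlt]
      have hBint : IntegrableOn (fun m => (deltam (unif P) m x) ^ 2)
          (Set.Ioc ((K:ℝ)/P.card) (((K:ℝ)+1)/P.card)) volume :=
        (integrableOn_const measure_Ioc_lt_top.ne).congr_fun
          hconst.symm measurableSet_Ioc
      have hsplit : Set.Ioc (0:ℝ) (((K:ℝ)+1)/P.card)
          = Set.Ioc (0:ℝ) ((K:ℝ)/P.card) ∪ Set.Ioc ((K:ℝ)/P.card) (((K:ℝ)+1)/P.card) :=
        (Set.Ioc_union_Ioc_eq_Ioc h1 h2).symm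
      rw [hcast]
      constructor
      · rw [hsplit]; exact ihI.union hBint
      · rw [hsplit, setIntegral_union (Set.Ioc_disjoint_Ioc_of_le le_rfl) measurableSet_Ioc ihI hBint,
          ihV, setIntegral_congr_fun measurableSet_Ioc hconst, setIntegral_const,
          Real.volume_real_Ioc_of_le h2, Finset.sum_range_succ,
          smul_eq_mul]
        field_simp
        ring
  obtain ⟨_, Heq⟩ := key k hkN
  -- The value of the squared distance to measure.
  have hval : (dtm (unif P) ((k:ℝ)/P.card) x) ^ 2
      = (k:ℝ)⁻¹ * ∑ j ∈ Finset.range k, G j ^ 2 := by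
    rw [dtm, Heq, Real.sq_sqrt]
    · rw [inv_div]
      field_simp
    · have hs : (0:ℝ) ≤ ∑ j ∈ Finset.range k, G j ^ 2 :=
        Finset.sum_nonneg fun j _ => sq_nonneg _
      have : (0:ℝ) ≤ ((k:ℝ)/P.card)⁻¹ := by positivity
      positivity
  -- Identify the sum over `range k` with a sum over `Fin k`.
  have hsum_eq : ∑ j ∈ Finset.range k, G j ^ 2 = ∑ j : Fin k, g (Fin.castLE hkN j) ^ 2 := by
    rw [← Fin.sum_univ_eq_sum_range]
    apply Finset.sum_congr rfl
    intro j _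
    rw [hG j (lt_of_lt_of_le j.2 hkN)]
    rfl
  -- The witness subset: the `k` nearest neighbors.
  set C₀ : Finset (EuclideanSpace ℝ (Fin d)) :=
    Finset.image (fun j : Fin k => q (Fin.castLE hkN j)) Finset.univ with hC₀
  have hq_injk : Function.Injective (fun j : Fin k => q (Fin.castLE hkN j)) :=
    hq_inj.comp (Fin.castLE_injective hkN)
  have hC₀mem : C₀ ∈ P.powersetCard k := by
    rw [Finset.mem_powersetCard]
    constructor
    · intro p hp
      rw [hC₀, Finset.mem_image] at hp
      obtain ⟨j, _, rfl⟩ := hp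
      exact hq_memP _
    · rw [hC₀, Finset.card_image_of_injective _ hq_injk, Finset.card_univ, Fintype.card_fin]
  have hC₀sum : ∑ p ∈ C₀, ‖x - p‖ ^ 2 = ∑ j ∈ Finset.range k, G j ^ 2 := by
    rw [hC₀, Finset.sum_image (fun a _ b _ h => hq_injk h), hsum_eq]
    apply Finset.sum_congr rfl
    intro j _
    rw [hq_norm]
  -- The candidate infimum value.
  set v : ℝ := (k:ℝ)⁻¹ * ∑ j ∈ Finset.range k, G j ^ 2 with hv
  have hvmem : v ∈ { y : ℝ | ∃ C ∈ P.powersetCard k, y = (k : ℝ)⁻¹ * ∑ p ∈ C, ‖x - p‖ ^ 2 } :=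
    ⟨C₀, hC₀mem, by rw [hC₀sum]⟩
  have hvlb : ∀ y ∈ { y : ℝ | ∃ C ∈ P.powersetCard k, y = (k : ℝ)⁻¹ * ∑ p ∈ C, ‖x - p‖ ^ 2 },
      v ≤ y := by
    rintro y ⟨C, hC, rfl⟩
    rw [Finset.mem_powersetCard] at hC
    obtain ⟨hCP, hCk⟩ := hC
    set I : Finset (Fin P.card) := Finset.univ.filter (fun i => q i ∈ C) with hI
    have hCI : C = I.image q := by
      apply Finset.Subset.antisymm
      · intro p hp
        have hpP : p ∈ P := hCP hp
        rw [hPq, Finset.mem_image] at hpP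
        obtain ⟨i, _, rfl⟩ := hpP
        exact Finset.mem_image_of_mem q (by rw [hI, Finset.mem_filter]; exact ⟨Finset.mem_univ _, hp⟩)
      · intro p hp
        rw [Finset.mem_image] at hp
        obtain ⟨i, hi, rfl⟩ := hp
        rw [hI, Finset.mem_filter] at hi
        exact hi.2
    have hIcard : I.card = k := by
      have h := Finset.card_image_of_injective I hq_inj
      rw [← hCI, hCk] at h
      omega
    have hsumC : ∑ p ∈ C, ‖x - p‖ ^ 2 = ∑ i ∈ I, g i ^ 2 := by
      rw [hCI, Finset.sum_image (fun a _ b _ h => hq_inj h)]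
      apply Finset.sum_congr rfl
      intro i _
      rw [hq_norm]
    rw [hv, hsumC, hsum_eq]
    apply mul_le_mul_of_nonneg_left _ (by positivity)
    exact auxSumMin hkN g hg hg0 I hIcard
  have hsInf : sInf { y : ℝ | ∃ C ∈ P.powersetCard k, y = (k : ℝ)⁻¹ * ∑ p ∈ C, ‖x - p‖ ^ 2 } = v :=
    le_antisymm (csInf_le ⟨v, hvlb⟩ hvmem) (le_csInf ⟨v, hvmem⟩ hvlb)
  rw [hsInf, hval]

end
end
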